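/- arXiv:1202.6350 — 9 statements merged into one kernel-verified Lean document; each statement's English description precedes it below -/
import Mathlib

section
/- Suppose Φ = {φ_i}_{i=1}^M and Ψ = {ψ_i}_{i=1}^M are tight frames for K^N that are unitarily equivalent, i.e., there exist a bijection p of {1,…,M}, a unitary N×N matrix U, and scalars c_i ∈ K with |c_i| = c > 0 such that ψ_i = c_i U φ_{p(i)} for all i. Then Φ is prime if and only if Ψ is prime. -/
open Finset

/-- A subcollection `{Φ i : i ∈ J}` of vectors in `K^N` is a tight frame (with some
positive bound `A`): `∑_{i∈J} |⟨x, Φ i⟩|² = A‖x‖²` for all `x`. -/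
def IsTightSub {K : Type*} [RCLike K] {N M : ℕ} (Φ : Fin M → EuclideanSpace K (Fin N))
    (J : Finset (Fin M)) : Prop :=
  ∃ A : ℝ, 0 < A ∧ ∀ x : EuclideanSpace K (Fin N),
    ∑ i ∈ J, ‖(inner K x (Φ i) : K)‖ ^ 2 = A * ‖x‖ ^ 2

/-- A tight frame is prime: it is tight and no proper subcollection is a tight frame. -/
def IsPrimeFrame {K : Type*} [RCLike K] {N M : ℕ}
    (Φ : Fin M → EuclideanSpace K (Fin N)) : Prop :=
  IsTightSub Φ Finset.univ ∧
    ∀ J : Finset (Fin M), J ⊂ Finset.univ → ¬ IsTightSub Φ J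

lemma tight_transfer {K : Type*} [RCLike K] {N M : ℕ}
    (Φ Ψ : Fin M → EuclideanSpace K (Fin N))
    (p : Equiv.Perm (Fin M))
    (U : EuclideanSpace K (Fin N) ≃ₗᵢ[K] EuclideanSpace K (Fin N))
    (c : Fin M → K) (cc : ℝ) (hcc : 0 < cc) (hc : ∀ i, ‖c i‖ = cc)
    (hΨΦ : ∀ i, Ψ i = c i • U (Φ (p i)))
    (J : Finset (Fin M)) (h : IsTightSub Ψ J) : IsTightSub Φ (J.image p) := by
  obtain ⟨A, hA, hsum⟩ := h
  refine ⟨A / cc ^ 2, by positivity, fun y => ?_⟩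
  have key : ∀ x : EuclideanSpace K (Fin N),
      ∑ i ∈ J, ‖(inner K x (Ψ i) : K)‖ ^ 2
        = cc ^ 2 * ∑ j ∈ J.image p, ‖(inner K (U.symm x) (Φ j) : K)‖ ^ 2 := by
    intro x
    rw [Finset.sum_image (fun a _ b _ h => p.injective h), Finset.mul_sum]
    refine Finset.sum_congr rfl fun i _ => ?_
    rw [hΨΦ i, inner_smul_right]
    have : (inner K x (U (Φ (p i))) : K) = inner K (U.symm x) (Φ (p i)) := by
      rw [← U.inner_map_map (U.symm x) (Φ (p i)), U.apply_symm_apply]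
    rw [this, norm_mul, hc, mul_pow]
  have hx := hsum (U y)
  rw [key] at hx
  have hnorm : ‖(U y : EuclideanSpace K (Fin N))‖ = ‖y‖ := U.norm_map y
  rw [hnorm] at hx
  have hUy : U.symm (U y) = y := U.symm_apply_apply y
  rw [hUy] at hx
  have hcc2 : (0:ℝ) < cc ^ 2 := by positivity
  rw [div_mul_eq_mul_div, eq_div_iff hcc2.ne']
  linarith [hx]

lemma prime_transfer {K : Type*} [RCLike K] {N M : ℕ}
    (Φ Ψ : Fin M → EuclideanSpace K (Fin N))
    (hΨ : IsTightSub Ψ Finset.univ)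
    (p : Equiv.Perm (Fin M))
    (U : EuclideanSpace K (Fin N) ≃ₗᵢ[K] EuclideanSpace K (Fin N))
    (c : Fin M → K) (cc : ℝ) (hcc : 0 < cc) (hc : ∀ i, ‖c i‖ = cc)
    (hΨΦ : ∀ i, Ψ i = c i • U (Φ (p i)))
    (h : IsPrimeFrame Φ) : IsPrimeFrame Ψ := by
  refine ⟨hΨ, fun J hJ hJt => ?_⟩
  have := tight_transfer Φ Ψ p U c cc hcc hc hΨΦ J hJt
  refine h.2 (J.image p) (Finset.ssubset_univ_iff.mpr fun hcontra => ?_) this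
  apply Finset.ssubset_univ_iff.mp hJ
  have h1 : (J.image p).card = M := by rw [hcontra, Finset.card_univ, Fintype.card_fin]
  rw [Finset.card_image_of_injective _ p.injective] at h1
  exact Finset.eq_univ_of_card _ (by rw [h1, Fintype.card_fin])

/-- Primality is preserved by unitary equivalence: if `ψ_i = c_i U φ_{p(i)}` with `p` a
permutation, `U` unitary and `|c_i| = c > 0`, then `Φ` is prime iff `Ψ` is prime. -/
theorem prime_iff_of_unitarily_equivalent {K : Type*} [RCLike K] {N M : ℕ}
    (Φ Ψ : Fin M → EuclideanSpace K (Fin N))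
    (hΦ : IsTightSub Φ Finset.univ) (hΨ : IsTightSub Ψ Finset.univ)
    (p : Equiv.Perm (Fin M))
    (U : EuclideanSpace K (Fin N) ≃ₗᵢ[K] EuclideanSpace K (Fin N))
    (c : Fin M → K) (cc : ℝ) (hcc : 0 < cc) (hc : ∀ i, ‖c i‖ = cc)
    (hΨΦ : ∀ i, Ψ i = c i • U (Φ (p i))) :
    IsPrimeFrame Φ ↔ IsPrimeFrame Ψ := by
  constructor
  · exact prime_transfer Φ Ψ hΨ p U c cc hcc hc hΨΦ
  · have hci : ∀ i, c i ≠ 0 := fun i h => by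
      have := hc i; rw [h, norm_zero] at this; exact absurd this.symm (ne_of_gt hcc)
    have hΦΨ : ∀ i, Φ i = (c (p.symm i))⁻¹ • U.symm (Ψ (p.symm i)) := by
      intro i
      rw [hΨΦ (p.symm i), p.apply_symm_apply]
      rw [map_smul, U.symm_apply_apply, smul_smul, inv_mul_cancel₀ (hci _), one_smul]
    refine prime_transfer Ψ Φ hΦ p.symm U.symm (fun i => (c (p.symm i))⁻¹) cc⁻¹
      (by positivity) (fun i => by rw [norm_inv, hc]) hΦΨ
end

section
/- (Welch bound) Let Φ = {φ_i}_{i=1}^M be a unit-norm tight frame for K^N with M ≥ N ≥ 1. Then max_{i≠j} |⟨φ_i,φ_j⟩| ≥ √((M−N)/(N(M−1))). -/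
open Finset

/-- Welch bound: for a unit-norm tight frame of `M ≥ N` vectors in `K^N`, the worst-case
coherence `max_{i≠j} |⟨φ_i,φ_j⟩|` is at least `√((M−N)/(N(M−1)))`. -/
theorem welch_bound {K : Type*} [RCLike K] {N M : ℕ} (hN : 1 ≤ N) (hNM : N ≤ M)
    (Φ : Fin M → EuclideanSpace K (Fin N)) (hnorm : ∀ i, ‖Φ i‖ = 1)
    (ht : ∀ x : EuclideanSpace K (Fin N),
      ∑ i, ‖(inner K x (Φ i) : K)‖ ^ 2 = ((M : ℝ) / N) * ‖x‖ ^ 2) :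
    Real.sqrt (((M : ℝ) - N) / (N * ((M : ℝ) - 1))) ≤
      ⨆ q : {q : Fin M × Fin M // q.1 ≠ q.2}, ‖(inner K (Φ q.val.1) (Φ q.val.2) : K)‖ := by
  have hM1 : 1 ≤ M
  · exact le_trans hN hNM
  rcases eq_or_lt_of_le hM1 with h1 | h2
  · -- M = 1, hence N = 1
    have hMN : M = N := le_antisymm (h1 ▸ hN) hNM
    haveI : IsEmpty {q : Fin M × Fin M // q.1 ≠ q.2} := by
      subst h1
      exact ⟨fun q => q.2 (Subsingleton.elim _ _)⟩
    rw [Real.iSup_of_isEmpty, hMN, sub_self, zero_div, Real.sqrt_zero]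
  · -- M ≥ 2
    set C := ⨆ q : {q : Fin M × Fin M // q.1 ≠ q.2}, ‖(inner K (Φ q.val.1) (Φ q.val.2) : K)‖ with hC
    have hbdd : BddAbove (Set.range fun q : {q : Fin M × Fin M // q.1 ≠ q.2} =>
        ‖(inner K (Φ q.val.1) (Φ q.val.2) : K)‖) := (Set.finite_range _).bddAbove
    have hle : ∀ i j, i ≠ j → ‖(inner K (Φ i) (Φ j) : K)‖ ≤ C := fun i j hij =>
      le_ciSup hbdd ⟨(i, j), hij⟩
    have q0 : {q : Fin M × Fin M // q.1 ≠ q.2} :=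
      ⟨(⟨0, by omega⟩, ⟨1, h2⟩), by simp [Fin.ext_iff]⟩
    have hC0 : 0 ≤ C := le_trans (norm_nonneg _) (le_ciSup hbdd q0)
    have hNpos : (0:ℝ) < N := by exact_mod_cast hN
    have hM2 : (2:ℝ) ≤ M := by exact_mod_cast h2
    -- total sum
    have hT : ∑ i, ∑ j, ‖(inner K (Φ i) (Φ j) : K)‖ ^ 2 = (M:ℝ) * ((M:ℝ) / N) := by
      rw [Finset.sum_congr rfl fun i _ => by rw [ht (Φ i), hnorm i, one_pow, mul_one]]
      simp [Finset.sum_const, mul_comm]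
    -- diagonal
    have hdiag : ∀ i : Fin M, ‖(inner K (Φ i) (Φ i) : K)‖ ^ 2 = 1 := fun i => by
      rw [inner_self_eq_norm_sq_to_K, hnorm i]
      norm_num
    have hrow : ∀ i : Fin M, ∑ j, ‖(inner K (Φ i) (Φ j) : K)‖ ^ 2
        = 1 + ∑ j ∈ Finset.univ.erase i, ‖(inner K (Φ i) (Φ j) : K)‖ ^ 2 := fun i => by
      rw [← Finset.add_sum_erase _ _ (Finset.mem_univ i), hdiag i]
    have hsplit : ∑ i, ∑ j ∈ Finset.univ.erase i, ‖(inner K (Φ i) (Φ j) : K)‖ ^ 2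
        = (M:ℝ) * ((M:ℝ) / N) - M := by
      rw [Finset.sum_congr rfl fun i _ => hrow i, Finset.sum_add_distrib, Finset.sum_const,
        Finset.card_univ, Fintype.card_fin, nsmul_eq_mul, mul_one] at hT
      linarith
    -- bound off-diagonal terms
    have hbound : ∑ i, ∑ j ∈ Finset.univ.erase i, ‖(inner K (Φ i) (Φ j) : K)‖ ^ 2
        ≤ (M:ℝ) * ((M:ℝ) - 1) * C ^ 2 := by
      calc ∑ i, ∑ j ∈ Finset.univ.erase i, ‖(inner K (Φ i) (Φ j) : K)‖ ^ 2
          ≤ ∑ i : Fin M, ∑ _j ∈ Finset.univ.erase i, C ^ 2 := by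
            refine Finset.sum_le_sum fun i _ => Finset.sum_le_sum fun j hj => ?_
            exact pow_le_pow_left₀ (norm_nonneg _) (hle i j (Finset.ne_of_mem_erase hj).symm) 2
        _ = (M:ℝ) * ((M:ℝ) - 1) * C ^ 2 := by
            rw [Finset.sum_congr rfl fun i _ => by
              rw [Finset.sum_const, Finset.card_erase_of_mem (Finset.mem_univ i),
                Finset.card_univ, Fintype.card_fin]]
            rw [Finset.sum_const, Finset.card_univ, Fintype.card_fin]
            simp [nsmul_eq_mul, Nat.cast_sub hM1]
            ring
    have key : ((M:ℝ) - N) / (N * ((M:ℝ) - 1)) ≤ C ^ 2 := by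
      rw [div_le_iff₀ (by nlinarith)]
      rw [hsplit] at hbound
      have hMpos : (0:ℝ) < M := by linarith
      have hNM' : (N:ℝ) ≤ M := by exact_mod_cast hNM
      have h'' : (M:ℝ) * M - M * N ≤ N * (M * ((M:ℝ) - 1) * C ^ 2) := by
        have hb2 : (M:ℝ) * M / N ≤ M * (M - 1) * C ^ 2 + M := by
          rw [mul_div_assoc]; linarith
        rw [div_le_iff₀ hNpos] at hb2
        nlinarith
      nlinarith
    calc Real.sqrt (((M:ℝ) - N) / (N * ((M:ℝ) - 1))) ≤ Real.sqrt (C ^ 2) :=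
          Real.sqrt_le_sqrt key
      _ = C := by rw [Real.sqrt_sq hC0]
end

section
/- Let N ≥ 2 and let Φ = {φ_i}_{i=1}^M be an equiangular unit-norm tight frame for K^N, i.e., there exists c ≥ 0 with |⟨φ_i,φ_j⟩| = c for all i ≠ j. Then Φ is prime: no proper subcollection of Φ is a tight frame for K^N. -/
open Finset

/-- In dimension at least 2, for any vector `v` there is a nonzero vector orthogonal to it. -/
lemma exists_ne_zero_inner_eq_zero {K : Type*} [RCLike K] {N : ℕ} (hN : 2 ≤ N)
    (v : EuclideanSpace K (Fin N)) :
    ∃ x : EuclideanSpace K (Fin N), x ≠ 0 ∧ (inner K x v : K) = 0 := by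
  set p0 : Fin N := ⟨0, by omega⟩
  set p1 : Fin N := ⟨1, by omega⟩
  have hp : p0 ≠ p1 := by simp [p0, p1, Fin.ext_iff]
  by_cases h0 : v p0 = 0
  · refine ⟨EuclideanSpace.single p0 1, ?_, ?_⟩
    · intro h
      have := congrArg (fun w => w p0) h
      simp [EuclideanSpace.single_apply] at this
    · rw [EuclideanSpace.inner_single_left]
      simp [h0]
  · refine ⟨(starRingEnd K (v p1)) • EuclideanSpace.single p0 1
        - (starRingEnd K (v p0)) • EuclideanSpace.single p1 1, ?_, ?_⟩
    · intro h
      have := congrArg (fun w => w p1) h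
      simp [EuclideanSpace.single_apply, hp, Ne.symm hp] at this
      exact h0 (by simpa using congrArg (starRingEnd K) this)
    · rw [inner_sub_left, inner_smul_left, inner_smul_left,
        EuclideanSpace.inner_single_left, EuclideanSpace.inner_single_left]
      simp only [RingHom.id_apply, map_one, one_mul, RCLike.conj_conj]
      ring

/-- Equiangular unit-norm tight frames in `K^N`, `N ≥ 2`, are prime. -/
theorem equiangular_funtf_is_prime {K : Type*} [RCLike K] {N M : ℕ} (hN : 2 ≤ N)
    (Φ : Fin M → EuclideanSpace K (Fin N)) (hnorm : ∀ i, ‖Φ i‖ = 1)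
    (ht : ∀ x : EuclideanSpace K (Fin N),
      ∑ i, ‖(inner K x (Φ i) : K)‖ ^ 2 = ((M : ℝ) / N) * ‖x‖ ^ 2)
    (c : ℝ) (hc : 0 ≤ c)
    (heq : ∀ i j, i ≠ j → ‖(inner K (Φ i) (Φ j) : K)‖ = c) :
    ∀ J : Finset (Fin M), J ⊂ Finset.univ → ¬ IsTightSub Φ J := by
  rintro J hJ ⟨A, hA, htight⟩
  obtain ⟨i1, -, hi1⟩ := Finset.exists_of_ssubset hJ
  -- evaluate at Φ i1 ∉ J : every term is c²
  have hsum1 : (J.card : ℝ) * c ^ 2 = A := by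
    have h := htight (Φ i1)
    rw [hnorm i1] at h
    rw [Finset.sum_congr rfl (fun j hj => by
      rw [heq i1 j (by rintro rfl; exact hi1 hj)])] at h
    simpa using h
  have hJne : J.Nonempty := by
    rcases J.eq_empty_or_nonempty with h | h
    · exfalso; rw [h] at hsum1; simp at hsum1; linarith
    · exact h
  obtain ⟨i0, hi0⟩ := hJne
  -- evaluate at Φ i0 ∈ J
  have hsum0 : 1 + ((J.card : ℝ) - 1) * c ^ 2 = A := by
    have h := htight (Φ i0)
    rw [hnorm i0, ← Finset.add_sum_erase _ _ hi0] at h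
    have hself : ‖(inner K (Φ i0) (Φ i0) : K)‖ ^ 2 = 1 := by
      rw [inner_self_eq_norm_sq_to_K]
      simp [hnorm i0]
    rw [hself, Finset.sum_congr rfl (fun j hj => by
      rw [heq i0 j (Ne.symm (Finset.ne_of_mem_erase hj))])] at h
    simp only [Finset.sum_const, nsmul_eq_mul, Finset.card_erase_of_mem hi0] at h
    rw [Nat.cast_sub (Finset.one_le_card.mpr ⟨i0, hi0⟩)] at h
    simpa using h
  have hcard1 : (1 : ℝ) ≤ J.card := by
    exact_mod_cast Finset.one_le_card.mpr ⟨i0, hi0⟩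
  have hc2 : c ^ 2 = 1 := by nlinarith
  -- so all vectors in J are scalar multiples of Φ i1
  obtain ⟨x, hx, hxv⟩ := exists_ne_zero_inner_eq_zero hN (Φ i1)
  have hzero : ∀ j ∈ J, (inner K x (Φ j) : K) = 0 := by
    intro j hj
    have hji : i1 ≠ j := by rintro rfl; exact hi1 hj
    have hne1 : Φ i1 ≠ 0 := by
      intro h; have := hnorm i1; rw [h] at this; simp at this
    have hnej : Φ j ≠ 0 := by
      intro h; have := hnorm j; rw [h] at this; simp at this
    have hCS : ‖(inner K (Φ i1) (Φ j) : K)‖ = ‖Φ i1‖ * ‖Φ j‖ := by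
      rw [heq i1 j hji, hnorm i1, hnorm j]
      nlinarith
    obtain ⟨r, -, hr⟩ := (norm_inner_eq_norm_iff hne1 hnej).mp hCS
    rw [hr, inner_smul_right, hxv, mul_zero]
  have h := htight x
  rw [Finset.sum_eq_zero (fun j hj => by rw [hzero j hj]; simp)] at h
  have hxn : ‖x‖ ≠ 0 := norm_ne_zero_iff.mpr hx
  have : A * ‖x‖ ^ 2 > 0 := by positivity
  linarith [this, h]
end

section
/- Let M ≥ 4 and let Φ = {φ_k}_{k=1}^M ⊂ ℂ² be the harmonic tight frame with φ_{k+1} = (1/√2)(1, γ^k)ᵗ, γ = e^{2πi/M}, k = 0,…,M−1. Then Φ is prime if and only if M is a prime number. -/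
open Finset

section aux

variable {M : ℕ}

/-- norm square of a complex number -/
lemma norm_sq_eq_normSq (z : ℂ) : ‖z‖ ^ 2 = Complex.normSq z := by
  rw [Complex.sq_norm]

lemma htf_key {M : ℕ} (γ : ℂ) (hγ1 : ‖γ‖ = 1)
    (Φ : Fin M → EuclideanSpace ℂ (Fin 2))
    (hΦ : ∀ (k : Fin M) (n : Fin 2),
      Φ k n = (1 / (Real.sqrt 2 : ℂ)) * γ ^ ((n : ℕ) * (k : ℕ)))
    (J : Finset (Fin M)) (x : EuclideanSpace ℂ (Fin 2)) :
    ∑ i ∈ J, ‖(inner ℂ x (Φ i) : ℂ)‖ ^ 2 =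
      (J.card : ℝ) / 2 * ‖x‖ ^ 2 +
        ((starRingEnd ℂ) (x 0) * x 1 * (starRingEnd ℂ) (∑ k ∈ J, γ ^ (k : ℕ))).re := by
  have hns : ∀ k : ℕ, Complex.normSq (γ ^ k) = 1 := by
    intro k
    rw [← norm_sq_eq_normSq, norm_pow, hγ1, one_pow, one_pow]
  have hc : Complex.normSq (1 / (Real.sqrt 2 : ℂ)) = 1 / 2 := by
    rw [map_div₀, map_one, Complex.normSq_ofReal,
      Real.mul_self_sqrt (by norm_num : (0:ℝ) ≤ 2)]
  have hterm : ∀ k ∈ J, ‖(inner ℂ x (Φ k) : ℂ)‖ ^ 2 =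
      1 / 2 * (Complex.normSq (x 0) + Complex.normSq (x 1))
        + ((starRingEnd ℂ) (x 0) * x 1 * (starRingEnd ℂ) (γ ^ (k : ℕ))).re := by
    intro k _
    have hinner : (inner ℂ x (Φ k) : ℂ) =
        (1 / (Real.sqrt 2 : ℂ)) *
          ((starRingEnd ℂ) (x 0) + (starRingEnd ℂ) (x 1) * γ ^ (k : ℕ)) := by
      simp only [PiLp.inner_apply, RCLike.inner_apply, Fin.sum_univ_two]
      rw [hΦ k 0, hΦ k 1]
      simp only [Fin.val_zero, Fin.val_one, zero_mul, one_mul, pow_zero, mul_one]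
      ring
    rw [hinner, norm_sq_eq_normSq, map_mul, hc, Complex.normSq_add,
      Complex.normSq_conj, map_mul, Complex.normSq_conj, hns, map_mul,
      Complex.conj_conj, ← mul_assoc]
    ring
  rw [Finset.sum_congr rfl hterm, Finset.sum_add_distrib, Finset.sum_const, nsmul_eq_mul]
  have hx : ‖x‖ ^ 2 = Complex.normSq (x 0) + Complex.normSq (x 1) := by
    rw [EuclideanSpace.norm_eq, Real.sq_sqrt (Finset.sum_nonneg fun i _ => sq_nonneg _)]
    simp [Fin.sum_univ_two, Complex.sq_norm]
  rw [hx]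
  congr 1
  · ring
  · rw [← Complex.re_sum, ← Finset.mul_sum, ← map_sum]

lemma tight_iff {M : ℕ} (γ : ℂ) (hγ1 : ‖γ‖ = 1)
    (Φ : Fin M → EuclideanSpace ℂ (Fin 2))
    (hΦ : ∀ (k : Fin M) (n : Fin 2),
      Φ k n = (1 / (Real.sqrt 2 : ℂ)) * γ ^ ((n : ℕ) * (k : ℕ)))
    (J : Finset (Fin M)) :
    IsTightSub Φ J ↔ J.Nonempty ∧ ∑ k ∈ J, γ ^ (k : ℕ) = 0 := by
  set S := ∑ k ∈ J, γ ^ (k : ℕ) with hS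
  have key := htf_key γ hγ1 Φ hΦ J
  constructor
  · rintro ⟨A, hA, hAx⟩
    -- useful vectors
    have hvec : ∀ b : ℂ, ‖b‖ = 1 →
        (J.card : ℝ) / 2 * 2 + (b * (starRingEnd ℂ) S).re = A * 2 := by
      intro b hb
      set x : EuclideanSpace ℂ (Fin 2) := (WithLp.equiv 2 (Fin 2 → ℂ)).symm ![1, b] with hxdef
      have hx0 : x 0 = 1 := by
        simp [hxdef, WithLp.equiv_symm_apply]
      have hx1 : x 1 = b := by
        simp [hxdef, WithLp.equiv_symm_apply]
      have hxnorm : ‖x‖ ^ 2 = 2 := by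
        rw [EuclideanSpace.norm_eq, Real.sq_sqrt (Finset.sum_nonneg fun i _ => sq_nonneg _)]
        rw [Fin.sum_univ_two, hx0, hx1, hb]
        norm_num
      have := (key x).symm.trans (hAx x)
      rw [hx0, hx1, hxnorm, map_one, one_mul] at this
      exact this
    have h1 := hvec 1 (by norm_num)
    have hm1 := hvec (-1) (by norm_num)
    have hI := hvec Complex.I (by simp)
    have hmI := hvec (-Complex.I) (by simp)
    have hre : ((starRingEnd ℂ) S).re = 0 := by
      have : (1 * (starRingEnd ℂ) S).re = ((-1) * (starRingEnd ℂ) S).re := by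
        linarith
      simp only [one_mul, neg_mul, Complex.neg_re] at this
      linarith
    have him : (Complex.I * (starRingEnd ℂ) S).re = 0 := by
      have : (Complex.I * (starRingEnd ℂ) S).re = ((-Complex.I) * (starRingEnd ℂ) S).re := by
        linarith
      simp only [neg_mul, Complex.neg_re] at this
      linarith
    have hS0 : S = 0 := by
      have h1' : S.re = 0 := by
        simpa [Complex.conj_re] using hre
      have h2' : S.im = 0 := by
        simp only [Complex.mul_re, Complex.I_re, Complex.I_im, Complex.conj_re,
          Complex.conj_im, zero_mul, one_mul, zero_sub, neg_neg] at him
        simpa using him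
      exact Complex.ext h1' h2'
    refine ⟨?_, hS0⟩
    -- nonempty
    by_contra hem
    rw [not_nonempty_iff_eq_empty] at hem
    subst hem
    have := hAx ((WithLp.equiv 2 (Fin 2 → ℂ)).symm ![1, 0])
    simp only [Finset.sum_empty] at this
    have hxnorm : ‖((WithLp.equiv 2 (Fin 2 → ℂ)).symm ![1, 0] : EuclideanSpace ℂ (Fin 2))‖ ^ 2
        = 1 := by
      rw [EuclideanSpace.norm_eq, Real.sq_sqrt (Finset.sum_nonneg fun i _ => sq_nonneg _)]
      rw [Fin.sum_univ_two]
      have h0 : ((WithLp.equiv 2 (Fin 2 → ℂ)).symm ![1, 0] : EuclideanSpace ℂ (Fin 2)) 0 = 1 := by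
        simp [WithLp.equiv_symm_apply]
      have h1 : ((WithLp.equiv 2 (Fin 2 → ℂ)).symm ![1, 0] : EuclideanSpace ℂ (Fin 2)) 1 = 0 := by
        simp [WithLp.equiv_symm_apply]
      rw [h0, h1]
      norm_num
    rw [hxnorm, mul_one] at this
    exact absurd this.symm (ne_of_gt hA)
  · rintro ⟨hne, hS0⟩
    refine ⟨(J.card : ℝ) / 2, div_pos (by exact_mod_cast Finset.card_pos.mpr hne) two_pos, ?_⟩
    intro x
    rw [key x, ← hS, hS0, map_zero, mul_zero, Complex.zero_re, add_zero]

end aux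

open Polynomial in
lemma no_vanish {M : ℕ} (hp : M.Prime) {γ : ℂ} (hprim : IsPrimitiveRoot γ M)
    {J : Finset (Fin M)} (hJ : J ⊂ Finset.univ) (hne : J.Nonempty)
    (hS : ∑ k ∈ J, γ ^ (k : ℕ) = 0) : False := by
  haveI : Fact M.Prime := ⟨hp⟩
  have hM0 : 0 < M := hp.pos
  set P : Polynomial ℚ := ∑ k ∈ J, X ^ (k : ℕ) with hP
  have hcoeff : ∀ j : Fin M, P.coeff (j : ℕ) = if j ∈ J then 1 else 0 := by
    intro j
    rw [hP]
    simp only [finset_sum_coeff, coeff_X_pow]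
    simp_rw [Fin.val_eq_val]
    exact Finset.sum_ite_eq J j (fun _ => (1 : ℚ))
  have hev : Polynomial.aeval γ P = 0 := by
    rw [hP]
    simp only [map_sum, map_pow, Polynomial.aeval_X]
    exact hS
  have hint : IsIntegral ℚ γ := (hprim.isIntegral hM0).tower_top
  have hdvd : cyclotomic M ℚ ∣ P := by
    rw [cyclotomic_eq_minpoly_rat hprim hM0]
    exact minpoly.dvd ℚ γ hev
  have hP0 : P ≠ 0 := by
    obtain ⟨j, hj⟩ := hne
    intro h
    have := hcoeff j
    rw [h] at this
    simp [hj] at this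
  have hPdeg : P.natDegree ≤ M - 1 := by
    rw [hP]
    refine le_trans (Polynomial.natDegree_sum_le _ _) ?_
    rw [Finset.fold_max_le]
    refine ⟨by omega, fun k _ => ?_⟩
    simp only [Function.comp_apply, Polynomial.natDegree_X_pow]
    exact Nat.le_pred_of_lt k.isLt
  obtain ⟨Q, hQ⟩ := hdvd
  have hcyc_deg : (cyclotomic M ℚ).natDegree = M - 1 := by
    rw [natDegree_cyclotomic, Nat.totient_prime hp]
  have hQ0 : Q ≠ 0 := by
    rintro rfl
    rw [mul_zero] at hQ
    exact hP0 hQ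
  have hdeg : P.natDegree = (M - 1) + Q.natDegree := by
    rw [hQ, Polynomial.natDegree_mul (cyclotomic_ne_zero M ℚ) hQ0, hcyc_deg]
  obtain ⟨c, hc⟩ := Polynomial.natDegree_eq_zero.mp (by omega : Q.natDegree = 0)
  have hcoeffP : ∀ j : Fin M, P.coeff (j : ℕ) = c := by
    intro j
    rw [hQ, ← hc, mul_comm, Polynomial.coeff_C_mul, cyclotomic_prime ℚ M]
    simp only [finset_sum_coeff, coeff_X_pow]
    rw [Finset.sum_ite_eq (Finset.range M) ((j : ℕ)) (fun _ => (1 : ℚ))]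
    simp [j.isLt]
  obtain ⟨j0, hj0⟩ := hne
  have hc1 : c = 1 := by
    have h1 := hcoeffP j0
    rw [hcoeff j0, if_pos hj0] at h1
    exact h1.symm
  have huniv : J = Finset.univ := by
    refine Finset.eq_univ_iff_forall.mpr fun j => ?_
    have h1 := hcoeffP j
    rw [hcoeff j, hc1] at h1
    by_contra hjn
    rw [if_neg hjn] at h1
    norm_num at h1
  exact hJ.ne huniv

lemma exists_vanish {M : ℕ} (hM : 2 ≤ M) (hnp : ¬ M.Prime) {γ : ℂ}
    (hprim : IsPrimitiveRoot γ M) :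
    ∃ J : Finset (Fin M), J ⊂ Finset.univ ∧ J.Nonempty ∧ ∑ k ∈ J, γ ^ (k : ℕ) = 0 := by
  obtain ⟨p, hp, hpd⟩ := Nat.exists_prime_and_dvd (by omega : M ≠ 1)
  obtain ⟨d, hd⟩ := hpd
  have hpM : p < M := by
    rcases lt_or_eq_of_le (Nat.le_of_dvd (by omega) ⟨d, hd⟩) with h | h
    · exact h
    · exact absurd (h ▸ hp) hnp
  have hdpos : 0 < d := Nat.pos_of_ne_zero (by rintro rfl; simp at hd; omega)
  have hlt : ∀ i : Fin p, (i : ℕ) * d < M := by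
    intro i
    calc (i : ℕ) * d < p * d := by
          exact Nat.mul_lt_mul_of_lt_of_le i.isLt le_rfl hdpos
      _ = M := hd.symm
  set f : Fin p → Fin M := fun i => ⟨(i : ℕ) * d, hlt i⟩ with hf
  have hinj : Function.Injective f := by
    intro i j hij
    have : (i : ℕ) * d = (j : ℕ) * d := congrArg Fin.val hij
    exact Fin.ext (Nat.eq_of_mul_eq_mul_right hdpos this)
  refine ⟨Finset.univ.image f, ?_, ?_, ?_⟩
  · rw [Finset.ssubset_univ_iff]
    intro h
    have := congrArg Finset.card h
    rw [Finset.card_image_of_injective _ hinj, Finset.card_univ, Finset.card_univ,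
      Fintype.card_fin, Fintype.card_fin] at this
    omega
  · exact (Finset.univ_nonempty_iff.mpr ⟨⟨0, hp.pos⟩⟩).image f
  · rw [Finset.sum_image (fun i _ j _ h => hinj h)]
    have hprim' : IsPrimitiveRoot (γ ^ d) p :=
      hprim.pow (by omega) (by rw [hd, mul_comm])
    calc ∑ i : Fin p, γ ^ ((f i : ℕ))
        = ∑ i : Fin p, (γ ^ d) ^ (i : ℕ) := by
          refine Finset.sum_congr rfl fun i _ => ?_
          rw [hf]
          simp only []
          rw [mul_comm, pow_mul]
      _ = ∑ i ∈ Finset.range p, (γ ^ d) ^ i := Fin.sum_univ_eq_sum_range _ _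
      _ = 0 := hprim'.geom_sum_eq_zero hp.one_lt

/-- The harmonic tight frame of `M ≥ 4` vectors in `ℂ²` is prime iff `M` is prime. -/
theorem htf_dim_two_prime_iff {M : ℕ} (hM : 4 ≤ M)
    (γ : ℂ) (hγ : γ = Complex.exp (2 * Real.pi * Complex.I / M))
    (Φ : Fin M → EuclideanSpace ℂ (Fin 2))
    (hΦ : ∀ (k : Fin M) (n : Fin 2),
      Φ k n = (1 / (Real.sqrt 2 : ℂ)) * γ ^ ((n : ℕ) * (k : ℕ))) :
    (∀ J : Finset (Fin M), J ⊂ Finset.univ → ¬ IsTightSub Φ J) ↔ Nat.Prime M := by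
  have hprim : IsPrimitiveRoot γ M := by
    rw [hγ]
    exact Complex.isPrimitiveRoot_exp M (by omega)
  have hγ1 : ‖γ‖ = 1 := by
    have hrw : γ = Complex.exp (((2 * Real.pi / M : ℝ) : ℂ) * Complex.I) := by
      rw [hγ]
      push_cast
      ring_nf
    rw [hrw, Complex.norm_exp_ofReal_mul_I]
  constructor
  · intro h
    by_contra hnp
    obtain ⟨J, hJ, hne, hS⟩ := exists_vanish (by omega) hnp hprim
    exact h J hJ ((tight_iff γ hγ1 Φ hΦ J).mpr ⟨hne, hS⟩)
  · intro hp J hJ ht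
    obtain ⟨hne, hS⟩ := (tight_iff γ hγ1 Φ hΦ J).mp ht
    exact no_vanish hp hprim hJ hne hS
end

section
/- Let N, M ∈ ℕ with N ≥ 1 and let Φ be the harmonic tight frame of M vectors in ℂ^N (φ_{k+1} having n-th entry (1/√N)γ^{(n−1)k}, γ = e^{2πi/M}). If d is a divisor of M with N ≤ d ≤ M − N, then the subcollection {φ_i : i ∈ I(d,1)}, where I(d,1) = {kM/d + 1 : k = 0,1,…,d−1}, is a tight frame for ℂ^N (with bound d/N); in particular Φ is (M,d)-divisible for every divisor d of M with N ≤ d ≤ M − N. -/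
open Finset

/-- Orthogonality of characters: the key root-of-unity sum. -/
lemma htf_key_s12 {d : ℕ} (hd0 : 0 < d) {ω : ℂ} (hω : IsPrimitiveRoot ω d)
    (n p : ℕ) (hn : n < d) (hp : p < d) :
    ∑ k ∈ Finset.range d, ((starRingEnd ℂ) ω) ^ (n * k) * ω ^ (p * k)
      = if n = p then (d : ℂ) else 0 := by
  have hωd : ω ^ d = 1 := hω.pow_eq_one
  have habs : ‖ω‖ = 1 := hω.norm'_eq_one hd0.ne'
  have hconj : (starRingEnd ℂ) ω * ω = 1 := by
    rw [← Complex.normSq_eq_conj_mul_self, Complex.normSq_eq_norm_sq, habs]; norm_num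
  have hrw : ∀ k, ((starRingEnd ℂ) ω) ^ (n * k) * ω ^ (p * k)
      = (((starRingEnd ℂ) ω) ^ n * ω ^ p) ^ k := by
    intro k
    rw [mul_pow, ← pow_mul, ← pow_mul]
  rw [Finset.sum_congr rfl fun k _ => hrw k]
  set u : ℂ := ((starRingEnd ℂ) ω) ^ n * ω ^ p with hu
  by_cases h : n = p
  · subst h
    have : u = 1 := by rw [hu, ← mul_pow, hconj, one_pow]
    simp [this]
  · have hωn : ω ^ n ≠ 0 := by
      intro h0
      have : ω = 0 := (pow_eq_zero_iff'.mp h0).1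
      simp [this] at habs
    have hcn : ((starRingEnd ℂ) ω) ^ n = (ω ^ n)⁻¹ :=
      eq_inv_of_mul_eq_one_left (by rw [← mul_pow, hconj, one_pow])
    have hune : u ≠ 1 := by
      intro h1
      apply h
      apply hω.pow_inj hn hp
      have : (ω ^ n)⁻¹ * ω ^ p = 1 := by rw [← hcn]; exact h1
      field_simp at this
      exact this.symm
    have hud : u ^ d = 1 := by
      rw [hu, mul_pow, ← pow_mul, ← pow_mul, mul_comm n d, mul_comm p d,
        pow_mul, pow_mul, ← map_pow, hωd]
      simp
    rw [geom_sum_eq hune, hud]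
    simp [h]

/-- For any divisor `d` of `M` with `N ≤ d ≤ M − N`, the subcollection of the harmonic
tight frame indexed by `I(d,1)` (the multiples of `M/d`) is a tight frame with bound
`d/N`; in particular the harmonic frame is `(M,d)`-divisible. -/
theorem htf_divisible_at_divisors {N M : ℕ} (hN : 1 ≤ N)
    (d : ℕ) (hdvd : d ∣ M) (hd1 : N ≤ d) (hd2 : d ≤ M - N)
    (γ : ℂ) (hγ : γ = Complex.exp (2 * Real.pi * Complex.I / M))
    (Φ : Fin M → EuclideanSpace ℂ (Fin N))
    (hΦ : ∀ (k : Fin M) (n : Fin N),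
      Φ k n = (1 / (Real.sqrt N : ℂ)) * γ ^ ((n : ℕ) * (k : ℕ))) :
    (∀ x : EuclideanSpace ℂ (Fin N),
      ∑ i ∈ Finset.univ.filter (fun i : Fin M => (M / d) ∣ (i : ℕ)),
        ‖(inner ℂ x (Φ i) : ℂ)‖ ^ 2 = ((d : ℝ) / N) * ‖x‖ ^ 2) ∧
    ∃ J : Finset (Fin M), J.card = d ∧ IsTightSub Φ J := by
  have hd0 : 0 < d := lt_of_lt_of_le hN hd1
  have hNM : N + d ≤ M := by omega
  have hM0 : 0 < M := by omega
  set m := M / d with hmdef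
  have hmd : m * d = M := Nat.div_mul_cancel hdvd
  have hm0 : 0 < m := by
    rcases Nat.eq_zero_or_pos m with h | h
    · rw [h, zero_mul] at hmd; omega
    · exact h
  set ω : ℂ := Complex.exp (2 * Real.pi * Complex.I / d) with hωdef
  have hω : IsPrimitiveRoot ω d := Complex.isPrimitiveRoot_exp d hd0.ne'
  have hγm : γ ^ m = ω := by
    rw [hγ, ← Complex.exp_nat_mul, hωdef]
    congr 1
    have hMne : (M : ℂ) ≠ 0 := by exact_mod_cast hM0.ne'
    have hdne : (d : ℂ) ≠ 0 := by exact_mod_cast hd0.ne'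
    have hmC : (m : ℂ) * d = M := by exact_mod_cast hmd
    field_simp
    exact hmC
  -- the indexing map
  have hlt : ∀ k, k < d → k * m < M := by
    intro k hk
    calc k * m < d * m := by exact (Nat.mul_lt_mul_right hm0).mpr hk
    _ = M := by rw [mul_comm]; exact hmd
  -- main claim
  have main : ∀ x : EuclideanSpace ℂ (Fin N),
      ∑ i ∈ Finset.univ.filter (fun i : Fin M => m ∣ (i : ℕ)),
        ‖(inner ℂ x (Φ i) : ℂ)‖ ^ 2 = ((d : ℝ) / N) * ‖x‖ ^ 2 := by
    intro x
    set S : ℕ → ℂ := fun k => ∑ n : Fin N, (starRingEnd ℂ) (x n) * ω ^ ((n : ℕ) * k)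
      with hS
    -- rewrite the filtered sum as a sum over range d
    have hset : (Finset.univ.filter (fun i : Fin M => m ∣ (i : ℕ)))
        = (Finset.range d).image (fun k => if h : k < d then (⟨k * m, hlt k h⟩ : Fin M)
            else ⟨0, hM0⟩) := by
      ext i
      simp only [Finset.mem_filter, Finset.mem_univ, true_and, Finset.mem_image,
        Finset.mem_range]
      constructor
      · rintro ⟨c, hc⟩
        have hcd : c < d := by
          by_contra hcge
          push_neg at hcge
          have : M ≤ (i : ℕ) := by
            calc M = m * d := hmd.symm
            _ ≤ m * c := Nat.mul_le_mul_left m hcge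
            _ = (i : ℕ) := hc.symm
          exact absurd i.isLt (by omega)
        refine ⟨c, hcd, ?_⟩
        rw [dif_pos hcd]
        apply Fin.ext
        rw [hc]
        exact Nat.mul_comm c m
      · rintro ⟨k, hk, rfl⟩
        rw [dif_pos hk]
        exact ⟨k, by simp [mul_comm]⟩
    rw [hset, Finset.sum_image]
    swap
    · intro a ha b hb hab
      simp only [Finset.mem_coe, Finset.mem_range] at ha hb
      beta_reduce at hab
      rw [dif_pos ha, dif_pos hb] at hab
      have := Fin.mk.injEq .. ▸ hab
      have h2 : a * m = b * m := by exact Fin.mk.inj_iff.mp hab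
      exact Nat.eq_of_mul_eq_mul_right hm0 h2
    -- inner products
    have hin : ∀ k ∈ Finset.range d,
        (inner ℂ x (Φ (if h : k < d then (⟨k * m, hlt k h⟩ : Fin M) else ⟨0, hM0⟩)) : ℂ)
          = (1 / (Real.sqrt N : ℂ)) * S k := by
      intro k hk
      rw [Finset.mem_range] at hk
      rw [dif_pos hk]
      rw [PiLp.inner_apply]
      rw [hS, Finset.mul_sum]
      refine Finset.sum_congr rfl fun n _ => ?_
      rw [hΦ]
      simp only [RCLike.inner_apply]
      have : γ ^ ((n : ℕ) * (k * m)) = ω ^ ((n : ℕ) * k) := by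
        rw [show (n : ℕ) * (k * m) = m * ((n : ℕ) * k) by ring, pow_mul, hγm]
      rw [this]
      ring
    rw [Finset.sum_congr rfl fun k hk => by rw [hin k hk]]
    -- factor out the constant
    have hNr : (0 : ℝ) < N := by exact_mod_cast hN
    have hc2 : ‖(1 / (Real.sqrt N : ℂ))‖ ^ 2 = 1 / N := by
      rw [norm_div, norm_one, Complex.norm_real, Real.norm_eq_abs,
        abs_of_nonneg (Real.sqrt_nonneg _), div_pow, one_pow, Real.sq_sqrt hNr.le]
    have hfac : ∀ k, ‖(1 / (Real.sqrt N : ℂ)) * S k‖ ^ 2 = (1 / N) * ‖S k‖ ^ 2 := by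
      intro k
      rw [norm_mul, mul_pow, hc2]
    rw [Finset.sum_congr rfl fun k _ => hfac k, ← Finset.mul_sum]
    -- the key complex computation
    have hconjS : ∀ k, (starRingEnd ℂ) (S k)
        = ∑ n : Fin N, x n * ((starRingEnd ℂ) ω) ^ ((n : ℕ) * k) := by
      intro k
      rw [hS, map_sum]
      refine Finset.sum_congr rfl fun n _ => ?_
      rw [map_mul, map_pow, Complex.conj_conj]
    have hsum : ∑ k ∈ Finset.range d, (starRingEnd ℂ) (S k) * S k
        = (d : ℂ) * ∑ n : Fin N, (starRingEnd ℂ) (x n) * x n := by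
      calc ∑ k ∈ Finset.range d, (starRingEnd ℂ) (S k) * S k
          = ∑ k ∈ Finset.range d, ∑ n : Fin N, ∑ p : Fin N,
              (x n * (starRingEnd ℂ) (x p)) *
                (((starRingEnd ℂ) ω) ^ ((n : ℕ) * k) * ω ^ ((p : ℕ) * k)) := by
            refine Finset.sum_congr rfl fun k _ => ?_
            rw [hconjS, hS, Finset.sum_mul_sum]
            refine Finset.sum_congr rfl fun n _ => Finset.sum_congr rfl fun p _ => by ring
        _ = ∑ n : Fin N, ∑ p : Fin N, (x n * (starRingEnd ℂ) (x p)) *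
              ∑ k ∈ Finset.range d,
                ((starRingEnd ℂ) ω) ^ ((n : ℕ) * k) * ω ^ ((p : ℕ) * k) := by
            rw [Finset.sum_comm]
            refine Finset.sum_congr rfl fun n _ => ?_
            rw [Finset.sum_comm]
            exact Finset.sum_congr rfl fun p _ => (Finset.mul_sum _ _ _).symm
        _ = ∑ n : Fin N, ∑ p : Fin N, (x n * (starRingEnd ℂ) (x p)) *
              (if ((n : Fin N) : ℕ) = ((p : Fin N) : ℕ) then (d : ℂ) else 0) := by
            refine Finset.sum_congr rfl fun n _ => Finset.sum_congr rfl fun p _ => ?_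
            rw [htf_key_s12 hd0 hω _ _ (lt_of_lt_of_le n.isLt hd1) (lt_of_lt_of_le p.isLt hd1)]
        _ = (d : ℂ) * ∑ n : Fin N, (starRingEnd ℂ) (x n) * x n := by
            rw [Finset.mul_sum]
            refine Finset.sum_congr rfl fun n _ => ?_
            have : ∀ p : Fin N, (((n : Fin N) : ℕ) = ((p : Fin N) : ℕ)) ↔ n = p := by
              intro p; exact Fin.val_inj
            simp only [this, mul_ite, mul_zero, Finset.sum_ite_eq, Finset.mem_univ,
              if_true]
            ring
    -- pass to reals
    have hcmul : ∀ z : ℂ, (starRingEnd ℂ) z * z = ((‖z‖ ^ 2 : ℝ) : ℂ) := by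
      intro z
      rw [← Complex.normSq_eq_conj_mul_self, Complex.normSq_eq_norm_sq]
    have hreal : ∑ k ∈ Finset.range d, ‖S k‖ ^ 2
        = (d : ℝ) * ∑ n : Fin N, ‖x n‖ ^ 2 := by
      have h1 : ((∑ k ∈ Finset.range d, ‖S k‖ ^ 2 : ℝ) : ℂ)
          = (((d : ℝ) * ∑ n : Fin N, ‖x n‖ ^ 2 : ℝ) : ℂ) := by
        rw [Complex.ofReal_sum, Complex.ofReal_mul, Complex.ofReal_sum]
        simp only [← hcmul]
        rw [hsum]
        norm_cast
      exact_mod_cast h1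
    rw [hreal]
    have hxnorm : ‖x‖ ^ 2 = ∑ n : Fin N, ‖x n‖ ^ 2 := by
      rw [EuclideanSpace.norm_eq, Real.sq_sqrt]
      exact Finset.sum_nonneg fun n _ => sq_nonneg _
    rw [hxnorm]
    ring
  refine ⟨main, Finset.univ.filter (fun i : Fin M => m ∣ (i : ℕ)), ?_, ?_⟩
  · -- cardinality
    have hset : (Finset.univ.filter (fun i : Fin M => m ∣ (i : ℕ)))
        = (Finset.range d).image (fun k => if h : k < d then (⟨k * m, hlt k h⟩ : Fin M)
            else ⟨0, hM0⟩) := by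
      ext i
      simp only [Finset.mem_filter, Finset.mem_univ, true_and, Finset.mem_image,
        Finset.mem_range]
      constructor
      · rintro ⟨c, hc⟩
        have hcd : c < d := by
          by_contra hcge
          push_neg at hcge
          have : M ≤ (i : ℕ) := by
            calc M = m * d := hmd.symm
            _ ≤ m * c := Nat.mul_le_mul_left m hcge
            _ = (i : ℕ) := hc.symm
          exact absurd i.isLt (by omega)
        refine ⟨c, hcd, ?_⟩
        rw [dif_pos hcd]
        apply Fin.ext
        rw [hc]
        exact Nat.mul_comm c m
      · rintro ⟨k, hk, rfl⟩
        rw [dif_pos hk]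
        exact ⟨k, by simp [mul_comm]⟩
    rw [hset, Finset.card_image_of_injOn, Finset.card_range]
    intro a ha b hb hab
    simp only [Finset.mem_coe, Finset.mem_range] at ha hb
    simp only [dif_pos ha, dif_pos hb] at hab
    have h2 : a * m = b * m := Fin.mk.inj_iff.mp hab
    exact Nat.eq_of_mul_eq_mul_right hm0 h2
  · refine ⟨(d : ℝ) / N, ?_, main⟩
    have hNr : (0 : ℝ) < N := by exact_mod_cast hN
    have hdr : (0 : ℝ) < d := by exact_mod_cast hd0
    positivity
end

section
/- Let N, M ∈ ℕ, N ≥ 2, and let Φ be the harmonic tight frame of M vectors in ℂ^N. If Φ is divisible (some proper subcollection is a tight frame for ℂ^N), then M has a divisor d with N ≤ d ≤ M − N. Conversely, if M has such a divisor, Φ is divisible. Hence Φ is prime if and only if D_{M,N} := {d : d | M, N ≤ d ≤ M − N} is empty; in particular if M is prime then Φ is prime. -/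
open Finset

noncomputable section

private lemma htf_vanish {N M : ℕ} (hN : 2 ≤ N)
    {γ : ℂ} {Φ : Fin M → EuclideanSpace ℂ (Fin N)}
    (hΦ : ∀ (k : Fin M) (n : Fin N),
      Φ k n = (1 / (Real.sqrt N : ℂ)) * γ ^ ((n : ℕ) * (k : ℕ)))
    {J : Finset (Fin M)} {A : ℝ}
    (h : ∀ x : EuclideanSpace ℂ (Fin N), ∑ i ∈ J, ‖(inner ℂ x (Φ i) : ℂ)‖ ^ 2 = A * ‖x‖ ^ 2)
    {j : ℕ} (hj0 : 0 < j) (hjN : j < N) :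
    ∑ k ∈ J, γ ^ (j * (k : ℕ)) = 0 := by
  classical
  have hN0 : (0:ℕ) < N := by omega
  -- the frame operator minus A • id
  set T : EuclideanSpace ℂ (Fin N) →ₗ[ℂ] EuclideanSpace ℂ (Fin N) :=
    { toFun := fun x => (∑ k ∈ J, (inner ℂ (Φ k) x : ℂ) • Φ k) - (A : ℂ) • x
      map_add' := by
        intro x y
        simp only [inner_add_right, add_smul, Finset.sum_add_distrib, smul_add]
        abel
      map_smul' := by
        intro c x
        simp only [inner_smul_right, mul_smul, smul_sub, Finset.smul_sum, RingHom.id_apply]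
        rw [smul_comm c ((A:ℂ))]
    } with hT
  have hT0 : T = 0 := by
    rw [← inner_map_self_eq_zero]
    intro x
    have hx : (inner (𝕜 := ℂ) (T x) x) =
        (((∑ i ∈ J, ‖(inner ℂ x (Φ i) : ℂ)‖ ^ 2) : ℝ) : ℂ) - ((A : ℝ) : ℂ) * ((‖x‖^2 : ℝ) : ℂ) := by
      simp only [hT, LinearMap.coe_mk, AddHom.coe_mk, inner_sub_left, sum_inner,
        inner_smul_left, inner_conj_symm, Complex.conj_ofReal]
      push_cast
      congr 1
      · refine Finset.sum_congr rfl fun k _ => ?_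
        rw [← inner_conj_symm x (Φ k)]
        set z : ℂ := inner ℂ (Φ k) x with hz
        rw [RCLike.norm_conj]
        rw [Complex.conj_mul']
      · rw [inner_self_eq_norm_sq_to_K]
        rfl
    rw [hx, h x]
    push_cast
    ring
  have hTx : ∀ x : EuclideanSpace ℂ (Fin N),
      (∑ k ∈ J, (inner ℂ (Φ k) x : ℂ) • Φ k) = (A : ℂ) • x := by
    intro x
    have := LinearMap.ext_iff.mp hT0 x
    simp only [hT, LinearMap.coe_mk, AddHom.coe_mk, LinearMap.zero_apply, sub_eq_zero] at this
    exact this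
  have hxx := congrArg (fun v : EuclideanSpace ℂ (Fin N) =>
      (inner ℂ (EuclideanSpace.single (⟨j, hjN⟩ : Fin N) (1:ℂ)) v : ℂ))
    (hTx (EuclideanSpace.single (⟨0, hN0⟩ : Fin N) (1:ℂ)))
  simp only [inner_sum, inner_smul_right, EuclideanSpace.inner_single_left,
    EuclideanSpace.inner_single_right, EuclideanSpace.single_apply, map_one, one_mul,
    mul_one] at hxx
  have hne : (⟨0, hN0⟩ : Fin N) ≠ (⟨j, hjN⟩ : Fin N) := by
    simp only [ne_eq, Fin.mk.injEq]
    omega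
  rw [if_neg hne, map_zero, mul_zero] at hxx
  have hNR : (0:ℝ) < Real.sqrt N := Real.sqrt_pos.mpr (by exact_mod_cast hN0)
  have key : ∀ k ∈ J, (starRingEnd ℂ) (Φ k ⟨0, hN0⟩) * Φ k ⟨j, hjN⟩
      = ((N:ℂ))⁻¹ * γ ^ (j * (k:ℕ)) := by
    intro k _
    rw [hΦ, hΦ]
    simp only [Fin.val_mk, zero_mul, pow_zero, mul_one, map_mul, map_div₀, map_one,
      Complex.conj_ofReal, map_pow]
    norm_cast
    rw [← mul_assoc, ← Complex.ofReal_mul]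
    have h2 : (1/Real.sqrt N) * (1/Real.sqrt N) = ((N:ℝ))⁻¹ := by
      rw [div_mul_div_comm, one_mul, Real.mul_self_sqrt (by positivity), one_div]
    rw [h2]
    push_cast
    ring
  rw [Finset.sum_congr rfl key, ← Finset.mul_sum] at hxx
  have hNne : ((N:ℂ))⁻¹ ≠ 0 := by
    simp only [ne_eq, inv_eq_zero, Nat.cast_eq_zero]
    omega
  exact (mul_eq_zero.mp hxx).resolve_left hNne

private lemma htf_forward {N M : ℕ} (hN : 2 ≤ N) (hM : 1 ≤ M)
    {γ : ℂ} (hγp : IsPrimitiveRoot γ M)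
    {Φ : Fin M → EuclideanSpace ℂ (Fin N)}
    (hΦ : ∀ (k : Fin M) (n : Fin N),
      Φ k n = (1 / (Real.sqrt N : ℂ)) * γ ^ ((n : ℕ) * (k : ℕ)))
    {J : Finset (Fin M)} (hJ : J ⊂ Finset.univ) (hT : IsTightSub Φ J) :
    ∃ d : ℕ, d ∣ M ∧ N ≤ d ∧ d ≤ M - N := by
  classical
  by_contra hnd
  push_neg at hnd
  obtain ⟨A, hA, h⟩ := hT
  have hN0 : (0:ℕ) < N := by omega
  -- J is nonempty
  have hJne : J.Nonempty := by
    rcases J.eq_empty_or_nonempty with hj | hj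
    · exfalso
      have h0 := h (EuclideanSpace.single (⟨0, hN0⟩ : Fin N) (1:ℂ))
      rw [hj] at h0
      simp only [Finset.sum_empty, EuclideanSpace.norm_single, norm_one, one_pow,
        mul_one] at h0
      exact hA.ne h0
    · exact hj
  -- every proper divisor of M is < N
  have hsmall : ∀ g : ℕ, g ∣ M → g ≠ M → g < N := by
    intro g hg hgM
    by_contra hge
    push_neg at hge
    obtain ⟨e, he⟩ := hg
    have he2 : 2 ≤ e := by
      rcases e with _ | _ | e
      · omega
      · omega
      · omega
    have h2g : 2 * g ≤ M := by nlinarith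
    have := hnd g ⟨e, he⟩ hge
    omega
  -- the 0/1 polynomial attached to J
  set P : Polynomial ℚ := ∑ k ∈ J, Polynomial.X ^ (k : ℕ) with hP
  -- P vanishes at γ^t for all 1 ≤ t < M
  have hvanish : ∀ j : ℕ, 0 < j → j < N → ∑ k ∈ J, (γ ^ j) ^ (k : ℕ) = 0 := by
    intro j hj0 hjN
    have := htf_vanish hN hΦ h hj0 hjN
    simpa [pow_mul] using this
  have haevalP : ∀ z : ℂ, (Polynomial.aeval z) P = ∑ k ∈ J, z ^ (k : ℕ) := by
    intro z
    rw [hP, map_sum]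
    simp
  have hroot : ∀ t : ℕ, 0 < t → t < M → ∑ k ∈ J, (γ ^ t) ^ (k : ℕ) = 0 := by
    intro t ht0 htM
    set g : ℕ := Nat.gcd M t with hg
    have hgM : g ∣ M := Nat.gcd_dvd_left M t
    have hgt : g ∣ t := Nat.gcd_dvd_right M t
    have hg0 : 0 < g := Nat.gcd_pos_of_pos_right M ht0
    have hgneM : g ≠ M := by
      intro hcon
      have := Nat.le_of_dvd ht0 hgt
      omega
    have hgN : g < N := hsmall g hgM hgneM
    set ℓ : ℕ := M / g with hℓ
    have hMgl : M = g * ℓ := (Nat.mul_div_cancel' hgM).symm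
    have hl0 : 0 < ℓ := Nat.div_pos (Nat.le_of_dvd (by omega) hgM) hg0
    have hprimg : IsPrimitiveRoot (γ ^ g) ℓ := hγp.pow (show 0 < M by omega) hMgl
    -- cyclotomic ℓ divides P
    have hPg : (Polynomial.aeval (γ ^ g)) P = 0 := by
      rw [haevalP]
      simpa [pow_mul] using hvanish g hg0 hgN
    have hdvd : Polynomial.cyclotomic ℓ ℚ ∣ P := by
      rw [Polynomial.cyclotomic_eq_minpoly_rat hprimg hl0]
      exact minpoly.dvd ℚ (γ ^ g) hPg
    -- γ^t is a primitive ℓ-th root of unity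
    have hprimt : IsPrimitiveRoot (γ ^ t) ℓ := by
      have hco : Nat.Coprime (t / g) ℓ := by
        rw [hℓ, hg]
        exact (Nat.coprime_div_gcd_div_gcd (hg ▸ hg0)).symm
      have := hprimg.pow_of_coprime (t / g) hco
      rwa [← pow_mul, Nat.mul_div_cancel' hgt] at this
    obtain ⟨q, hq⟩ := hdvd
    have : (Polynomial.aeval (γ ^ t)) P = 0 := by
      rw [hq, map_mul]
      have hcyc : (Polynomial.aeval (γ ^ t)) (Polynomial.cyclotomic ℓ ℚ) = 0 := by
        rw [Polynomial.aeval_def, Polynomial.eval₂_eq_eval_map, Polynomial.map_cyclotomic]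
        exact hprimt.isRoot_cyclotomic hl0
      rw [hcyc, zero_mul]
    rwa [haevalP] at this
  -- double counting
  have hswap : ∑ t ∈ Finset.range M, ∑ k ∈ J, (γ ^ t) ^ (k : ℕ)
      = ∑ k ∈ J, ∑ t ∈ Finset.range M, (γ ^ (k : ℕ)) ^ t := by
    rw [Finset.sum_comm]
    refine Finset.sum_congr rfl fun k _ => Finset.sum_congr rfl fun t _ => ?_
    rw [← pow_mul, ← pow_mul, mul_comm]
  have hleft : ∑ t ∈ Finset.range M, ∑ k ∈ J, (γ ^ t) ^ (k : ℕ) = (J.card : ℂ) := by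
    rw [Finset.sum_eq_single_of_mem 0 (Finset.mem_range.mpr (by omega))]
    · simp
    · intro t htmem htne
      exact hroot t (Nat.pos_of_ne_zero htne) (Finset.mem_range.mp htmem)
  have hright : ∑ k ∈ J, ∑ t ∈ Finset.range M, (γ ^ (k : ℕ)) ^ t
      = if (⟨0, by omega⟩ : Fin M) ∈ J then (M : ℂ) else 0 := by
    rw [← Finset.sum_ite_eq' J (⟨0, by omega⟩ : Fin M) (fun _ => (M : ℂ))]
    refine Finset.sum_congr rfl fun k hk => ?_
    by_cases hk0 : k = (⟨0, by omega⟩ : Fin M)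
    · subst hk0
      simp
    · rw [if_neg hk0]
      have hk0' : 0 < (k : ℕ) := by
        rcases Nat.eq_zero_or_pos (k : ℕ) with h0 | h0
        · exact absurd (Fin.ext (by simpa using h0)) hk0
        · exact h0
      have hne1 : γ ^ (k : ℕ) ≠ 1 := hγp.pow_ne_one_of_pos_of_lt hk0'.ne' k.isLt
      rw [geom_sum_eq hne1]
      rw [← pow_mul, mul_comm, pow_mul, hγp.pow_eq_one, one_pow]
      simp
  rw [hswap, hright] at hleft
  by_cases h0J : (⟨0, by omega⟩ : Fin M) ∈ J
  · rw [if_pos h0J] at hleft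
    have hcard : J.card = M := by exact_mod_cast hleft.symm
    have : J = Finset.univ := Finset.eq_univ_of_card J (by simpa using hcard)
    exact hJ.ne this
  · rw [if_neg h0J] at hleft
    have hcard : J.card = 0 := by exact_mod_cast hleft.symm
    exact hJne.ne_empty (Finset.card_eq_zero.mp hcard)

private lemma htf_backward {N M : ℕ} (hN : 2 ≤ N) (hM : 1 ≤ M)
    {γ : ℂ} (hγp : IsPrimitiveRoot γ M)
    {Φ : Fin M → EuclideanSpace ℂ (Fin N)}
    (hΦ : ∀ (k : Fin M) (n : Fin N),
      Φ k n = (1 / (Real.sqrt N : ℂ)) * γ ^ ((n : ℕ) * (k : ℕ)))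
    {d : ℕ} (hd : d ∣ M) (hNd : N ≤ d) (hdMN : d ≤ M - N) :
    ∃ J : Finset (Fin M), J ⊂ Finset.univ ∧ IsTightSub Φ J := by
  classical
  have hdM : d ≤ M := Nat.le_of_dvd (by omega) hd
  have hNM : N + N ≤ M := by omega
  have hd0 : 0 < d := by omega
  obtain ⟨e, hMde⟩ := hd
  have he2 : 2 ≤ e := by
    have he0 : e ≠ 0 := by
      rintro rfl
      rw [mul_zero] at hMde
      omega
    have he1 : e ≠ 1 := by
      rintro rfl
      rw [mul_one] at hMde
      omega
    omega
  have hlt : ∀ i : Fin d, (i : ℕ) * e < M := by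
    intro i
    calc (i : ℕ) * e < d * e := mul_lt_mul_of_pos_right i.isLt (by omega)
    _ = M := hMde.symm
  set f : Fin d → Fin M := fun i => ⟨(i : ℕ) * e, hlt i⟩ with hf
  have hinj : Function.Injective f := by
    intro a b hab
    simp only [hf, Fin.mk.injEq] at hab
    exact Fin.ext (Nat.eq_of_mul_eq_mul_right (by omega) hab)
  set J : Finset (Fin M) := Finset.image f Finset.univ with hJ
  have hγne : ‖γ‖ = 1 := hγp.norm'_eq_one (by omega)
  have hconjγ : (starRingEnd ℂ) γ = γ⁻¹ := (Complex.inv_eq_conj hγne).symm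
  have hγ0 : γ ≠ 0 := by
    intro hcon
    rw [hcon] at hγne
    simp at hγne
  have hζ : IsPrimitiveRoot (γ ^ e) d := hγp.pow (by omega) (by rw [hMde, mul_comm])
  refine ⟨J, ?_, ?_⟩
  · rw [Finset.ssubset_univ_iff]
    intro hEq
    have h1mem : (⟨1, by omega⟩ : Fin M) ∈ J := hEq ▸ Finset.mem_univ _
    rw [hJ, Finset.mem_image] at h1mem
    obtain ⟨i, -, hi⟩ := h1mem
    have h1 : (i : ℕ) * e = 1 := congrArg Fin.val hi
    have : e = 1 := Nat.dvd_one.mp ⟨(i:ℕ), by rw [← h1]; ring⟩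
    omega
  · refine ⟨(d : ℝ) / N, by positivity, fun x => ?_⟩
    -- key orthogonality computation
    have hkey : ∀ n m : Fin N, ∑ k ∈ J, (Φ k n * (starRingEnd ℂ) (Φ k m))
        = if n = m then (d : ℂ) * ((N : ℂ))⁻¹ else 0 := by
      intro n m
      rw [hJ, Finset.sum_image (fun a _ b _ hab => hinj hab)]
      have hNc : ((1:ℂ) / (Real.sqrt N : ℂ)) * ((1:ℂ) / (Real.sqrt N : ℂ)) = ((N : ℂ))⁻¹ := by
        rw [div_mul_div_comm, one_mul, ← Complex.ofReal_mul,
          Real.mul_self_sqrt (by positivity), one_div]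
        push_cast
        ring
      have hterm : ∀ i : Fin d, Φ (f i) n * (starRingEnd ℂ) (Φ (f i) m)
          = ((N : ℂ))⁻¹ * ((γ ^ ((n:ℕ) * e) * (γ ^ ((m:ℕ) * e))⁻¹) ^ (i : ℕ)) := by
        intro i
        rw [hΦ, hΦ]
        have hfv : ((f i : Fin M) : ℕ) = (i : ℕ) * e := rfl
        rw [hfv, map_mul, map_pow, hconjγ, map_div₀, map_one, Complex.conj_ofReal]
        rw [← inv_pow, mul_pow, ← pow_mul, ← pow_mul]
        rw [show (n:ℕ) * ((i:ℕ) * e) = (n:ℕ) * e * (i:ℕ) by ring,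
          show (m:ℕ) * ((i:ℕ) * e) = (m:ℕ) * e * (i:ℕ) by ring, ← hNc]
        ring
      rw [Finset.sum_congr rfl (fun i _ => hterm i), ← Finset.mul_sum]
      by_cases hnm : n = m
      · subst hnm
        rw [if_pos rfl]
        rw [mul_inv_cancel₀ (pow_ne_zero _ hγ0)]
        simp [mul_comm]
      · rw [if_neg hnm]
        have hune : γ ^ ((n:ℕ) * e) * (γ ^ ((m:ℕ) * e))⁻¹ ≠ 1 := by
          intro hcon
          rw [mul_inv_eq_one₀ (pow_ne_zero _ hγ0)] at hcon
          rw [mul_comm ((n:ℕ)) e, mul_comm ((m:ℕ)) e, pow_mul, pow_mul] at hcon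
          exact hnm (Fin.ext (hζ.pow_inj (lt_of_lt_of_le n.isLt hNd)
            (lt_of_lt_of_le m.isLt hNd) hcon))
        rw [Fin.sum_univ_eq_sum_range (fun i => (γ ^ ((n:ℕ) * e) * (γ ^ ((m:ℕ) * e))⁻¹) ^ i)]
        rw [geom_sum_eq hune]
        have hud : (γ ^ ((n:ℕ) * e) * (γ ^ ((m:ℕ) * e))⁻¹) ^ d = 1 := by
          rw [mul_pow, ← pow_mul, inv_pow, ← pow_mul]
          rw [show (n:ℕ) * e * d = M * (n:ℕ) by rw [hMde]; ring,
            show (m:ℕ) * e * d = M * (m:ℕ) by rw [hMde]; ring]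
          rw [pow_mul, pow_mul, hγp.pow_eq_one, one_pow, one_pow]
          simp
        rw [hud, sub_self, zero_div, mul_zero]
    -- expand the frame sum
    have hz : ∀ k : Fin M, (inner ℂ x (Φ k) : ℂ) * (starRingEnd ℂ) (inner ℂ x (Φ k) : ℂ)
        = ∑ n : Fin N, ∑ m : Fin N,
            ((starRingEnd ℂ) (x n) * x m) * (Φ k n * (starRingEnd ℂ) (Φ k m)) := by
      intro k
      rw [PiLp.inner_apply]
      simp only [RCLike.inner_apply, map_sum, map_mul, RingHomCompTriple.comp_apply,
        Complex.conj_conj, RingHom.id_apply]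
      rw [Finset.sum_mul_sum]
      refine Finset.sum_congr rfl fun n _ => Finset.sum_congr rfl fun m _ => ?_
      ring
    apply Complex.ofReal_injective
    push_cast
    calc (∑ i ∈ J, ((‖(inner ℂ x (Φ i) : ℂ)‖ : ℂ)) ^ 2)
        = ∑ k ∈ J, (inner ℂ x (Φ k) : ℂ) * (starRingEnd ℂ) (inner ℂ x (Φ k) : ℂ) := by
          refine Finset.sum_congr rfl fun k _ => ?_
          rw [Complex.mul_conj']
      _ = ∑ n : Fin N, ∑ m : Fin N, ((starRingEnd ℂ) (x n) * x m)
            * (∑ k ∈ J, (Φ k n * (starRingEnd ℂ) (Φ k m))) := by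
          rw [Finset.sum_congr rfl (fun k _ => hz k)]
          rw [Finset.sum_comm]
          refine Finset.sum_congr rfl fun n _ => ?_
          rw [Finset.sum_comm]
          refine Finset.sum_congr rfl fun m _ => ?_
          rw [Finset.mul_sum]
      _ = ∑ n : Fin N, ((starRingEnd ℂ) (x n) * x n) * ((d : ℂ) * ((N : ℂ))⁻¹) := by
          refine Finset.sum_congr rfl fun n _ => ?_
          rw [Finset.sum_congr rfl (fun m _ => by rw [hkey n m])]
          simp
      _ = ((d : ℂ) * ((N : ℂ))⁻¹) * ∑ n : Fin N, (starRingEnd ℂ) (x n) * x n := by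
          rw [Finset.mul_sum]
          exact Finset.sum_congr rfl fun n _ => by ring
      _ = (d : ℂ) / (N : ℂ) * ((‖x‖ : ℂ)) ^ 2 := by
          have hxx : (inner ℂ x x : ℂ) = ∑ n : Fin N, (starRingEnd ℂ) (x n) * x n := by
            rw [PiLp.inner_apply]
            simp [RCLike.inner_apply, Complex.conj_mul']
          rw [← hxx, inner_self_eq_norm_sq_to_K, div_eq_mul_inv]
          rfl

/-- The harmonic tight frame of `M` vectors in `ℂ^N` (`N ≥ 2`) is divisible iff `M` has a
divisor `d` with `N ≤ d ≤ M − N`; equivalently it is prime iff no such divisor exists.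
In particular, if `M` is prime then the frame is prime. -/
theorem htf_prime_iff_no_divisor {N M : ℕ} (hN : 2 ≤ N) (hM : 1 ≤ M)
    (γ : ℂ) (hγ : γ = Complex.exp (2 * Real.pi * Complex.I / M))
    (Φ : Fin M → EuclideanSpace ℂ (Fin N))
    (hΦ : ∀ (k : Fin M) (n : Fin N),
      Φ k n = (1 / (Real.sqrt N : ℂ)) * γ ^ ((n : ℕ) * (k : ℕ))) :
    ((∃ J : Finset (Fin M), J ⊂ Finset.univ ∧ IsTightSub Φ J) ↔
        ∃ d : ℕ, d ∣ M ∧ N ≤ d ∧ d ≤ M - N) ∧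
    ((∀ J : Finset (Fin M), J ⊂ Finset.univ → ¬ IsTightSub Φ J) ↔
        ¬ ∃ d : ℕ, d ∣ M ∧ N ≤ d ∧ d ≤ M - N) ∧
    (Nat.Prime M → ∀ J : Finset (Fin M), J ⊂ Finset.univ → ¬ IsTightSub Φ J) := by
  have hγp : IsPrimitiveRoot γ M := by
    rw [hγ]
    exact Complex.isPrimitiveRoot_exp M (by omega)
  have h1 : (∃ J : Finset (Fin M), J ⊂ Finset.univ ∧ IsTightSub Φ J) ↔
      ∃ d : ℕ, d ∣ M ∧ N ≤ d ∧ d ≤ M - N := by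
    constructor
    · rintro ⟨J, hJ, hT⟩
      exact htf_forward hN hM hγp hΦ hJ hT
    · rintro ⟨d, hd, hNd, hdMN⟩
      exact htf_backward hN hM hγp hΦ hd hNd hdMN
  have h2 : (∀ J : Finset (Fin M), J ⊂ Finset.univ → ¬ IsTightSub Φ J) ↔
      ¬ ∃ d : ℕ, d ∣ M ∧ N ≤ d ∧ d ≤ M - N := by
    rw [← h1, not_exists]
    simp only [not_and]
  refine ⟨h1, h2, fun hp J hJ hT => ?_⟩
  obtain ⟨d, hdvd, hNd, hdMN⟩ := h1.mp ⟨J, hJ, hT⟩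
  have hdM : d ≤ M := Nat.le_of_dvd (by omega) hdvd
  rcases hp.eq_one_or_self_of_dvd d hdvd with h | h
  · omega
  · omega

end
end

section
/- Let Φ = HTF(N,M) be the harmonic tight frame of M unit-norm vectors in ℂ^N, N ≥ 2, M > N. Then its worst-case coherence satisfies μ_Φ := max_{k≠ℓ} |⟨φ_k,φ_ℓ⟩| = (1/N)·sin(πN/M)/sin(π/M). -/
open Finset

open Real Finset in

lemma sin_mono_aux : ∀ (n : ℕ) (a b : ℝ), 0 < a → a ≤ b → n * b ≤ π →
    sin (n * b) * sin a ≤ sin (n * a) * sin b := by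
  intro n
  induction n with
  | zero => intro a b _ _ _; simp
  | succ n ih =>
    intro a b ha hab hb
    rcases Nat.eq_zero_or_pos n with hn | hn
    · subst hn; simp [mul_comm]
    have hbpi : b ≤ π / 2 := by
      have h2 : (2 : ℝ) ≤ (n + 1 : ℕ) := by exact_mod_cast Nat.succ_le_succ hn
      have : 2 * b ≤ ((n:ℕ) + 1) * b := by
        push_cast at h2 ⊢
        nlinarith [ha.trans_le hab]
      push_cast at hb
      linarith
    have hb0 : 0 < b := ha.trans_le hab
    have hnb : (n : ℝ) * b ≤ π := by
      push_cast at hb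
      nlinarith [hb0]
    have h1 := ih a b ha hab hnb
    have hcosab : cos b ≤ cos a := cos_le_cos_of_nonneg_of_le_pi ha.le (by linarith [pi_pos]) hab
    have hcosb : 0 ≤ cos b := cos_nonneg_of_mem_Icc ⟨by linarith, hbpi⟩
    have hcosn : cos ((n:ℝ) * b) ≤ cos ((n:ℝ) * a) := by
      apply cos_le_cos_of_nonneg_of_le_pi (by positivity) hnb
      nlinarith
    have hsina : 0 ≤ sin a := sin_nonneg_of_nonneg_of_le_pi ha.le (by linarith)
    have hsinb : 0 ≤ sin b := sin_nonneg_of_nonneg_of_le_pi hb0.le (by linarith)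
    have hsnb : 0 ≤ sin ((n:ℝ) * b) := sin_nonneg_of_nonneg_of_le_pi (by positivity) hnb
    have hsna : 0 ≤ sin ((n:ℝ) * a) := by
      apply sin_nonneg_of_nonneg_of_le_pi (by positivity)
      nlinarith
    have ea : ((n:ℝ) + 1) * a = n * a + a := by ring
    have eb : ((n:ℝ) + 1) * b = n * b + b := by ring
    push_cast
    rw [ea, eb, sin_add, sin_add]
    have key : cos b * (sin ((n:ℝ)*b) * sin a) ≤ cos a * (sin ((n:ℝ)*a) * sin b) := by
      apply mul_le_mul hcosab h1 (mul_nonneg hsnb hsina) (hcosb.trans hcosab)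
    nlinarith [mul_nonneg hsina hsinb]

open Real Finset in
section
open Real Finset

lemma abs_sin_nat_pi_sub (k : ℕ) (x : ℝ) : |sin (k * π - x)| = |sin x| := by
  rw [Real.sin_nat_mul_pi_sub]
  rw [abs_neg, abs_mul, abs_pow, abs_neg, abs_one, one_pow, one_mul]


lemma htf_core (N M d : ℕ) (hN : 1 ≤ N) (hd : 1 ≤ d) (hNM : 2*N ≤ M) (hdM : 2*d ≤ M) :
    |sin (π*N*d/M)| * sin (π/M) ≤ sin (π*N/M) * sin (π*d/M) := by
  have hMn : 0 < M := by omega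
  have hM0 : (0:ℝ) < M := by exact_mod_cast hMn
  have hN1 : (1:ℝ) ≤ N := by exact_mod_cast hN
  have hd1 : (1:ℝ) ≤ d := by exact_mod_cast hd
  have hNM' : 2*(N:ℝ) ≤ M := by exact_mod_cast hNM
  have hdM' : 2*(d:ℝ) ≤ M := by exact_mod_cast hdM
  rcases le_or_gt (N*d) M with h | h
  · -- monotone case
    have h' : (N:ℝ)*d ≤ M := by exact_mod_cast h
    have habs : |sin (π*N*d/M)| = sin (π*N*d/M) := by
      rw [abs_of_nonneg]
      apply sin_nonneg_of_nonneg_of_le_pi (by positivity)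
      rw [div_le_iff₀ hM0]
      nlinarith [pi_pos]
    rw [habs]
    have key := sin_mono_aux N (π/M) (π*d/M) (by positivity)
      (by rw [div_le_div_iff₀ hM0 hM0]
          nlinarith [mul_nonneg (mul_pos pi_pos hM0).le (sub_nonneg.2 hd1)])
      (by rw [show (N:ℝ)*(π*d/M) = π*(N*d)/M by ring, div_le_iff₀ hM0]
          nlinarith [mul_le_mul_of_nonneg_left h' pi_pos.le])
    calc sin (π*N*d/M) * sin (π/M) = sin ((N:ℝ) * (π*d/M)) * sin (π/M) := by ring_nf
      _ ≤ sin ((N:ℝ) * (π/M)) * sin (π*d/M) := key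
      _ = sin (π*N/M) * sin (π*d/M) := by ring_nf
  · -- crude bound case
    have hs1 : 2/π * (π*N/M) ≤ sin (π*N/M) := by
      apply mul_le_sin (by positivity)
      rw [div_le_div_iff₀ hM0 (by norm_num : (0:ℝ) < 2)]
      nlinarith [pi_pos]
    have hs2 : 2/π * (π*d/M) ≤ sin (π*d/M) := by
      apply mul_le_sin (by positivity)
      rw [div_le_div_iff₀ hM0 (by norm_num : (0:ℝ) < 2)]
      nlinarith [pi_pos]
    have hsmall : sin (π/M) ≤ π/M := sin_le (by positivity)
    have habs : |sin (π*N*d/M)| ≤ 1 := abs_sin_le_one _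
    have hsinpos : 0 < sin (π/M) := by
      apply sin_pos_of_pos_of_lt_pi (by positivity)
      rw [div_lt_iff₀ hM0]
      nlinarith [pi_pos]
    have hMd : (M:ℝ) ≤ N*d := by
      have : M ≤ N*d := h.le
      exact_mod_cast this
    have hpi : (0:ℝ) < π := pi_pos
    have hpi4 : π ≤ 4 := by nlinarith [pi_le_four]
    calc |sin (π*N*d/M)| * sin (π/M) ≤ 1 * (π/M) := by
          apply mul_le_mul habs hsmall hsinpos.le (by norm_num)
      _ ≤ (2/π * (π*N/M)) * (2/π * (π*d/M)) := by
          rw [one_mul]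
          have e1 : (2/π * (π*N/M)) * (2/π * (π*d/M)) = 4*(N*d)/(M*M) := by
            field_simp; ring
          rw [e1, div_le_div_iff₀ hM0 (by positivity)]
          nlinarith
      _ ≤ sin (π*N/M) * sin (π*d/M) := by
          apply mul_le_mul hs1 hs2 (by positivity) (sin_nonneg_of_nonneg_of_le_pi (by positivity) ?_)
          rw [div_le_iff₀ hM0]; nlinarith

lemma htf_key_d (N M d : ℕ) (hN : 1 ≤ N) (hd : 1 ≤ d) (hNM : 2*N ≤ M) (hdM : d < M) :
    |sin (π*N*d/M)| * sin (π/M) ≤ sin (π*N/M) * sin (π*d/M) := by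
  have hMn : 0 < M := by omega
  have hM0 : (0:ℝ) < M := by exact_mod_cast hMn
  rcases le_or_gt (2*d) M with h | h
  · exact htf_core N M d hN hd hNM h
  · have hcast : ((M-d : ℕ) : ℝ) = (M:ℝ) - d := by
      rw [Nat.cast_sub hdM.le]
    have h1 : |sin (π*N*d/M)| = |sin (π*N*(M-d:ℕ)/M)| := by
      rw [hcast]
      have e : π*N*((M:ℝ)-d)/M = N*π - π*N*d/M := by field_simp
      rw [e, abs_sin_nat_pi_sub]
    have h2 : sin (π*d/M) = sin (π*(M-d:ℕ)/M) := by
      rw [hcast]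
      have e : π*((M:ℝ)-d)/M = π - π*d/M := by field_simp
      rw [e, sin_pi_sub]
    rw [h1, h2]
    exact htf_core N M (M-d) hN (by omega) hNM (by omega)

lemma htf_key_s14 (N M d : ℕ) (hN : 1 ≤ N) (hNM : N < M) (hd : 1 ≤ d) (hdM : d < M) :
    |sin (π*N*d/M)| * sin (π/M) ≤ sin (π*N/M) * sin (π*d/M) := by
  have hMn : 0 < M := by omega
  have hM0 : (0:ℝ) < M := by exact_mod_cast hMn
  rcases le_or_gt (2*N) M with h | h
  · exact htf_key_d N M d hN hd h hdM
  · have hcast : ((M-N : ℕ) : ℝ) = (M:ℝ) - N := by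
      rw [Nat.cast_sub hNM.le]
    have h1 : |sin (π*N*d/M)| = |sin (π*(M-N:ℕ)*d/M)| := by
      rw [hcast]
      have e : π*((M:ℝ)-N)*d/M = d*π - π*N*d/M := by field_simp
      rw [e, abs_sin_nat_pi_sub]
    have h2 : sin (π*N/M) = sin (π*(M-N:ℕ)/M) := by
      rw [hcast]
      have e : π*((M:ℝ)-N)/M = π - π*N/M := by field_simp
      rw [e, sin_pi_sub]
    rw [h1, h2]
    exact htf_key_d (M-N) M d (by omega) hd (by omega) hdM

lemma norm_exp_mul_I_sub_one (θ : ℝ) : ‖Complex.exp (θ * Complex.I) - 1‖ = 2 * |Real.sin (θ/2)| := by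
  rw [Complex.exp_mul_I, ← Complex.ofReal_cos, ← Complex.ofReal_sin]
  rw [show ((Real.cos θ : ℂ) + (Real.sin θ : ℂ) * Complex.I - 1)
      = ((Real.cos θ - 1 : ℝ) : ℂ) + ((Real.sin θ : ℝ) : ℂ) * Complex.I by push_cast; ring]
  rw [Complex.norm_add_mul_I]
  have h2 : (Real.cos θ - 1)^2 + Real.sin θ^2 = (2 * |Real.sin (θ/2)|)^2 := by
    have hs : Real.sin (θ/2)^2 = 1/2 - Real.cos (2*(θ/2))/2 := Real.sin_sq_eq_half_sub _
    rw [show 2*(θ/2) = θ by ring] at hs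
    have hp := Real.sin_sq_add_cos_sq θ
    have ha : |Real.sin (θ/2)|^2 = Real.sin (θ/2)^2 := sq_abs _
    nlinarith
  rw [h2, Real.sqrt_sq (by positivity)]

lemma exp_ne_one (M d : ℕ) (hM : 0 < M) (hd1 : 1 ≤ d) (hd2 : d < M) :
    Complex.exp (((2*π*d/M : ℝ)) * Complex.I) ≠ 1 := by
  intro h
  rw [Complex.exp_eq_one_iff] at h
  obtain ⟨n, hn⟩ := h
  have hM0 : (0:ℝ) < M := by exact_mod_cast hM
  have hIC : ((2*π*d/M : ℝ):ℂ) * Complex.I = ((n*(2*π) : ℝ):ℂ) * Complex.I := by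
    push_cast at hn ⊢
    linear_combination hn
  have := mul_right_cancel₀ Complex.I_ne_zero hIC
  have hr : (2*π*d/M : ℝ) = n * (2*π) := by exact_mod_cast this
  have hd0 : (0:ℝ) < d := by exact_mod_cast hd1
  have hdM : (d:ℝ) < M := by exact_mod_cast hd2
  have hn' : (d:ℝ) = n * M := by
    field_simp at hr
    nlinarith [pi_pos]
  rcases le_or_gt n 0 with h0 | h0
  · have : (n:ℝ) * M ≤ 0 := mul_nonpos_of_nonpos_of_nonneg (by exact_mod_cast h0) hM0.le
    linarith
  · have h1 : (1:ℝ) ≤ n := by exact_mod_cast h0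
    nlinarith



lemma htf_inner_norm {N M : ℕ} (hN : 2 ≤ N) (hM : N < M)
    (γ : ℂ) (hγ : γ = Complex.exp (2 * Real.pi * Complex.I / M))
    (Φ : Fin M → EuclideanSpace ℂ (Fin N))
    (hΦ : ∀ (k : Fin M) (n : Fin N),
      Φ k n = (1 / (Real.sqrt N : ℂ)) * γ ^ ((n : ℕ) * (k : ℕ)))
    (k ℓ : Fin M) (hkl : (k:ℕ) < (ℓ:ℕ)) :
    ‖(inner ℂ (Φ k) (Φ ℓ) : ℂ)‖
      = |Real.sin (π*N*((ℓ:ℕ)-(k:ℕ))/M)| / (N * Real.sin (π*((ℓ:ℕ)-(k:ℕ))/M)) := by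
  have hMn : 0 < M := by omega
  have hM0 : (0:ℝ) < M := by exact_mod_cast hMn
  have hN0 : (0:ℝ) < N := by positivity
  set d : ℕ := (ℓ:ℕ) - (k:ℕ) with hd
  have hd1 : 1 ≤ d := by omega
  have hd2 : d < M := by omega
  have hdcast : ((d:ℕ):ℝ) = ((ℓ:ℕ):ℝ) - ((k:ℕ):ℝ) := by
    rw [hd, Nat.cast_sub hkl.le]
  rw [← hdcast]
  have hγ0 : γ ≠ 0 := by rw [hγ]; exact Complex.exp_ne_zero _
  have hγconj : (starRingEnd ℂ) γ = γ⁻¹ := by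
    rw [hγ, ← Complex.exp_conj, ← Complex.exp_neg]
    congr 1
    simp [Complex.ext_iff]
    ring
  -- the geometric ratio
  have hz : γ ^ d = Complex.exp (((2*π*d/M : ℝ)) * Complex.I) := by
    rw [hγ, ← Complex.exp_nat_mul]
    congr 1
    push_cast
    ring
  have hz1 : γ ^ d ≠ 1 := hz ▸ exp_ne_one M d hMn hd1 hd2
  -- inner product as sum
  have hinner : (inner ℂ (Φ k) (Φ ℓ) : ℂ)
      = (1/(N:ℂ)) * ∑ n ∈ range N, (γ ^ d) ^ n := by
    rw [PiLp.inner_apply]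
    have hterm : ∀ n : Fin N, (inner ℂ (Φ k n) (Φ ℓ n) : ℂ) = (1/(N:ℂ)) * (γ ^ d) ^ (n:ℕ) := by
      intro n
      rw [hΦ k n, hΦ ℓ n]
      simp only [RCLike.inner_apply, map_mul, map_pow, hγconj]
      have hconj1 : (starRingEnd ℂ) (1 / (Real.sqrt N : ℂ)) = 1 / (Real.sqrt N : ℂ) := by
        simp [Complex.conj_ofReal]
      rw [hconj1]
      have hsq : (1 / (Real.sqrt N : ℂ)) * (1 / (Real.sqrt N : ℂ)) = 1/(N:ℂ) := by
        rw [div_mul_div_comm, one_mul]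
        congr 1
        rw [← Complex.ofReal_mul, Real.mul_self_sqrt (by positivity)]
        simp
      have hpow : (γ⁻¹) ^ ((n:ℕ) * (k:ℕ)) * γ ^ ((n:ℕ) * (ℓ:ℕ)) = (γ ^ d) ^ (n:ℕ) := by
        rw [inv_pow, ← zpow_natCast γ ((n:ℕ) * (k:ℕ)), ← zpow_natCast γ ((n:ℕ) * (ℓ:ℕ)),
          ← zpow_neg, ← zpow_add₀ hγ0, ← pow_mul, ← zpow_natCast γ (d * (n:ℕ))]
        congr 1
        have : (ℓ:ℕ) = d + (k:ℕ) := by omega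
        rw [this]
        push_cast
        ring
      rw [mul_comm]
      calc (1 / (Real.sqrt N : ℂ)) * (γ⁻¹) ^ ((n:ℕ) * (k:ℕ)) * ((1 / (Real.sqrt N : ℂ)) * γ ^ ((n:ℕ) * (ℓ:ℕ)))
          = ((1 / (Real.sqrt N : ℂ)) * (1 / (Real.sqrt N : ℂ))) * ((γ⁻¹) ^ ((n:ℕ) * (k:ℕ)) * γ ^ ((n:ℕ) * (ℓ:ℕ))) := by ring
        _ = (1/(N:ℂ)) * (γ ^ d) ^ (n:ℕ) := by rw [hsq, hpow]
    rw [Finset.sum_congr rfl (fun n _ => hterm n), Fin.sum_univ_eq_sum_range (fun n => (1/(N:ℂ)) * (γ ^ d) ^ n) N, mul_sum]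
  -- norm computation
  have h1N : ‖(1/(N:ℂ))‖ = 1/(N:ℝ) := by
    rw [norm_div, norm_one]
    congr 1
    simp [Complex.norm_natCast]
  rw [hinner, geom_sum_eq hz1, norm_mul, h1N, norm_div]
  have hzN : (γ ^ d) ^ N = Complex.exp (((2*π*(d*N)/M : ℝ)) * Complex.I) := by
    rw [hz, ← Complex.exp_nat_mul]
    congr 1
    push_cast
    ring
  have hnum : ‖(γ ^ d) ^ N - 1‖ = 2 * |Real.sin (π*N*d/M)| := by
    rw [hzN, norm_exp_mul_I_sub_one]
    congr 2
    push_cast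
    ring
  have hden : ‖γ ^ d - 1‖ = 2 * Real.sin (π*d/M) := by
    rw [hz, norm_exp_mul_I_sub_one]
    rw [show (2*π*d/M)/2 = π*d/M by ring]
    rw [abs_of_nonneg]
    apply sin_nonneg_of_nonneg_of_le_pi (by positivity)
    rw [div_le_iff₀ hM0]
    have : (d:ℝ) ≤ M := by exact_mod_cast hd2.le
    nlinarith [pi_pos]
  rw [hnum, hden]
  have hsd : 0 < Real.sin (π*d/M) := by
    apply sin_pos_of_pos_of_lt_pi (by positivity)
    rw [div_lt_iff₀ hM0]
    have : (d:ℝ) < M := by exact_mod_cast hd2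
    nlinarith [pi_pos]
  field_simp

/-- The worst-case coherence of the harmonic tight frame `HTF(N,M)`, `M > N ≥ 2`, is
`(1/N)·sin(πN/M)/sin(π/M)`. -/
theorem htf_coherence {N M : ℕ} (hN : 2 ≤ N) (hM : N < M)
    (γ : ℂ) (hγ : γ = Complex.exp (2 * Real.pi * Complex.I / M))
    (Φ : Fin M → EuclideanSpace ℂ (Fin N))
    (hΦ : ∀ (k : Fin M) (n : Fin N),
      Φ k n = (1 / (Real.sqrt N : ℂ)) * γ ^ ((n : ℕ) * (k : ℕ))) :
    (⨆ q : {q : Fin M × Fin M // q.1 ≠ q.2}, ‖(inner ℂ (Φ q.val.1) (Φ q.val.2) : ℂ)‖)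
      = (1 / N) * (Real.sin (Real.pi * N / M) / Real.sin (Real.pi / M)) := by
  have hMn : 0 < M := by omega
  have hM0 : (0:ℝ) < M := by exact_mod_cast hMn
  have hN0 : (0:ℝ) < N := by positivity
  have hNM : (N:ℝ) < M := by exact_mod_cast hM
  have hsin1 : 0 < Real.sin (π/M) := by
    apply sin_pos_of_pos_of_lt_pi (by positivity)
    rw [div_lt_iff₀ hM0]
    have hM2 : (2:ℝ) ≤ M := by exact_mod_cast (by omega : 2 ≤ M)
    nlinarith [pi_pos]
  have hsinN : 0 ≤ Real.sin (π*N/M) := by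
    apply sin_nonneg_of_nonneg_of_le_pi (by positivity)
    rw [div_le_iff₀ hM0]
    nlinarith [pi_pos]
  haveI : Nonempty {q : Fin M × Fin M // q.1 ≠ q.2} :=
    ⟨⟨(⟨0, by omega⟩, ⟨1, by omega⟩), by simp [Fin.ext_iff]⟩⟩
  -- bound for ordered pairs
  have bound : ∀ k ℓ : Fin M, (k:ℕ) < (ℓ:ℕ) → ‖(inner ℂ (Φ k) (Φ ℓ) : ℂ)‖
      ≤ (1 / N) * (Real.sin (π * N / M) / Real.sin (π / M)) := by
    intro k ℓ hkl
    rw [htf_inner_norm hN hM γ hγ Φ hΦ k ℓ hkl]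
    have hdcast : (((ℓ:ℕ) - (k:ℕ) : ℕ) : ℝ) = ((ℓ:ℕ):ℝ) - ((k:ℕ):ℝ) := by
      rw [Nat.cast_sub hkl.le]
    rw [← hdcast]
    set d : ℕ := (ℓ:ℕ) - (k:ℕ) with hd
    have hd1 : 1 ≤ d := by omega
    have hd2 : d < M := by omega
    have hsind : 0 < Real.sin (π*d/M) := by
      apply sin_pos_of_pos_of_lt_pi (by positivity)
      rw [div_lt_iff₀ hM0]
      have : (d:ℝ) < M := by exact_mod_cast hd2
      nlinarith [pi_pos]
    have key := htf_key_s14 N M d (by omega) hM hd1 hd2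
    rw [show (1/(N:ℝ)) * (Real.sin (π*N/M) / Real.sin (π/M))
        = Real.sin (π*N/M) / ((N:ℝ) * Real.sin (π/M)) by field_simp]
    rw [div_le_div_iff₀ (by positivity) (by positivity)]
    nlinarith [key, hN0]
  have bound' : ∀ q : {q : Fin M × Fin M // q.1 ≠ q.2},
      ‖(inner ℂ (Φ q.val.1) (Φ q.val.2) : ℂ)‖
      ≤ (1 / N) * (Real.sin (π * N / M) / Real.sin (π / M)) := by
    rintro ⟨⟨k, ℓ⟩, hq⟩
    rcases lt_trichotomy (k:ℕ) (ℓ:ℕ) with h | h | h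
    · exact bound k ℓ h
    · exact absurd (Fin.ext h) hq
    · rw [norm_inner_symm]
      exact bound ℓ k h
  apply le_antisymm
  · exact ciSup_le bound'
  · have hvq : ‖(inner ℂ (Φ (⟨0, by omega⟩ : Fin M)) (Φ (⟨1, by omega⟩ : Fin M)) : ℂ)‖
        = (1 / N) * (Real.sin (π * N / M) / Real.sin (π / M)) := by
      rw [htf_inner_norm hN hM γ hγ Φ hΦ _ _ (by simp)]
      simp only [Fin.val_mk, Nat.cast_one, Nat.cast_zero]
      rw [show ((1:ℝ) - 0) = 1 by ring]
      rw [mul_one, mul_one, abs_of_nonneg hsinN]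
      field_simp
    calc (1/(N:ℝ)) * (Real.sin (π * N / M) / Real.sin (π / M))
        = ‖(inner ℂ (Φ (⟨0, by omega⟩ : Fin M)) (Φ (⟨1, by omega⟩ : Fin M)) : ℂ)‖ := hvq.symm
      _ ≤ _ := le_ciSup (f := fun q : {q : Fin M × Fin M // q.1 ≠ q.2} =>
            ‖(inner ℂ (Φ q.val.1) (Φ q.val.2) : ℂ)‖) (Set.Finite.bddAbove (Set.finite_range _))
          (⟨(⟨0, by omega⟩, ⟨1, by omega⟩), by simp [Fin.ext_iff]⟩ :
            {q : Fin M × Fin M // q.1 ≠ q.2})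

end
end

section
/- Let d | M with d ≥ N, and let U = diag(γ⁰, γ¹, …, γ^{N−1}) where γ = e^{2πi/M}. Let Φ₁ = {φ_i : i ∈ I(d,1)} be the tight subframe of the harmonic frame HTF(N,M) indexed by I(d,1) = {kM/d + 1 : 0 ≤ k ≤ d−1}. Then for each q = 1,…,M/d, the subcollection {φ_i : i ∈ I(d,q)}, I(d,q) = {kM/d + q : 0 ≤ k ≤ d−1}, equals U^{q−1}Φ₁ (as a set of vectors, i.e., φ_{kM/d+q} = U^{q−1} φ_{kM/d+1}), and in particular each {φ_i : i ∈ I(d,q)} is a tight frame for ℂ^N with bound d/N. Consequently HTF(N,M) is a disjoint union of M/d tight frames of d vectors each. -/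
open Finset

lemma htf_aux1 {N M d s : ℕ} (hs : 0 < s) (hds : d * s = M) (hdN : N ≤ d)
    {γ : ℂ} (hprim : IsPrimitiveRoot γ M) (hM : 0 < M) (n m : Fin N) :
    ∑ k ∈ Finset.range d, ((γ ^ (n : ℕ) * γ⁻¹ ^ (m : ℕ)) ^ s) ^ k
      = if n = m then (d : ℂ) else 0 := by
  have hγ0 : γ ≠ 0 := hprim.ne_zero hM.ne'
  by_cases h : n = m
  · subst h
    rw [← mul_pow, mul_inv_cancel₀ hγ0, one_pow, one_pow]
    simp
  · rw [if_neg h]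
    set c : ℤ := (n : ℕ) - (m : ℕ) with hc
    have hw : γ ^ (n : ℕ) * γ⁻¹ ^ (m : ℕ) = γ ^ c := by
      rw [hc, zpow_sub₀ hγ0, zpow_natCast, zpow_natCast, div_eq_mul_inv, inv_pow]
    have hr : (γ ^ (n : ℕ) * γ⁻¹ ^ (m : ℕ)) ^ s = γ ^ (c * s) := by
      rw [hw, ← zpow_natCast (γ ^ c) s, ← zpow_mul]
    have hc0 : c ≠ 0 := by
      simp only [hc, sub_ne_zero]
      exact_mod_cast fun hh => h (Fin.ext (by exact_mod_cast hh))
    have hcb : |c| < (d : ℤ) := by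
      rw [hc]
      have := n.2; have := m.2
      rw [abs_sub_lt_iff]
      constructor <;> [skip; skip] <;> push_cast <;> omega
    have hne : γ ^ (c * s) ≠ 1 := by
      intro h1
      rw [hprim.zpow_eq_one_iff_dvd] at h1
      have hdvd := h1
      have hds' : ((M : ℤ)) = (d : ℤ) * s := by exact_mod_cast hds.symm
      rw [hds'] at hdvd
      have hsd : (d : ℤ) ∣ c :=
        (mul_dvd_mul_iff_right (c := (s : ℤ)) (by exact_mod_cast hs.ne')).mp hdvd
      have : (d : ℤ) ≤ |c| := Int.le_of_dvd (abs_pos.mpr hc0) ((dvd_abs _ _).mpr hsd)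
      omega
    have hrd : (γ ^ (c * s)) ^ d = 1 := by
      rw [← zpow_natCast (γ ^ (c*s)) d, ← zpow_mul]
      have : c * s * d = (M : ℤ) * c := by push_cast [← hds]; ring
      rw [this, zpow_mul, zpow_natCast, hprim.pow_eq_one, one_zpow]
    rw [hr, geom_sum_eq hne, hrd, sub_self, zero_div]

lemma htf_aux2 {N M d s q : ℕ} (hs : 0 < s) (hds : d * s = M) (hdN : N ≤ d) (hM : 0 < M)
    {γ : ℂ} (hprim : IsPrimitiveRoot γ M) (a : Fin N → ℂ) :
    ∑ k ∈ Finset.range d, ((∑ n : Fin N, a n * γ ^ ((n : ℕ) * (k * s + q))) *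
        (starRingEnd ℂ) (∑ n : Fin N, a n * γ ^ ((n : ℕ) * (k * s + q))))
      = (d : ℂ) * ∑ n : Fin N, a n * (starRingEnd ℂ) (a n) := by
  have hγ0 : γ ≠ 0 := hprim.ne_zero hM.ne'
  have habs : ‖γ‖ = 1 := by
    have h1 : ‖γ‖ ^ M = 1 := by
      rw [← norm_pow, hprim.pow_eq_one, norm_one]
    rcases lt_trichotomy (‖γ‖) 1 with h | h | h
    · have := pow_lt_one₀ (norm_nonneg γ) h hM.ne'
      rw [h1] at this; exact absurd this (lt_irrefl 1)
    · exact h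
    · have := one_lt_pow₀ h hM.ne'
      rw [h1] at this; exact absurd this (lt_irrefl 1)
  have hconj : (starRingEnd ℂ) γ = γ⁻¹ := by
    have := Complex.mul_conj γ
    rw [Complex.normSq_eq_norm_sq, habs] at this
    simp only [one_pow, Complex.ofReal_one] at this
    exact (inv_eq_of_mul_eq_one_right this).symm
  calc ∑ k ∈ Finset.range d, ((∑ n : Fin N, a n * γ ^ ((n : ℕ) * (k * s + q))) *
        (starRingEnd ℂ) (∑ n : Fin N, a n * γ ^ ((n : ℕ) * (k * s + q))))
      = ∑ k ∈ Finset.range d, ∑ n : Fin N, ∑ m : Fin N,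
          (a n * (starRingEnd ℂ) (a m)) *
            (((γ ^ (n : ℕ) * γ⁻¹ ^ (m : ℕ)) ^ s) ^ k * (γ ^ (n : ℕ) * γ⁻¹ ^ (m : ℕ)) ^ q) := by
        refine Finset.sum_congr rfl fun k _ => ?_
        rw [map_sum, Finset.sum_mul_sum]
        refine Finset.sum_congr rfl fun n _ => Finset.sum_congr rfl fun m _ => ?_
        rw [map_mul, map_pow, hconj]
        ring
    _ = ∑ n : Fin N, ∑ m : Fin N, (a n * (starRingEnd ℂ) (a m)) *
          ((γ ^ (n : ℕ) * γ⁻¹ ^ (m : ℕ)) ^ q) *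
          ∑ k ∈ Finset.range d, ((γ ^ (n : ℕ) * γ⁻¹ ^ (m : ℕ)) ^ s) ^ k := by
        rw [Finset.sum_comm]
        refine Finset.sum_congr rfl fun n _ => ?_
        rw [Finset.sum_comm]
        refine Finset.sum_congr rfl fun m _ => ?_
        rw [Finset.mul_sum]
        refine Finset.sum_congr rfl fun k _ => ?_
        ring
    _ = ∑ n : Fin N, ∑ m : Fin N, (a n * (starRingEnd ℂ) (a m)) *
          ((γ ^ (n : ℕ) * γ⁻¹ ^ (m : ℕ)) ^ q) * (if n = m then (d : ℂ) else 0) := by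
        refine Finset.sum_congr rfl fun n _ => Finset.sum_congr rfl fun m _ => ?_
        rw [htf_aux1 hs hds hdN hprim hM]
    _ = ∑ n : Fin N, (a n * (starRingEnd ℂ) (a n)) *
          ((γ ^ (n : ℕ) * γ⁻¹ ^ (n : ℕ)) ^ q) * (d : ℂ) := by
        refine Finset.sum_congr rfl fun n _ => ?_
        rw [Finset.sum_eq_single n]
        · rw [if_pos rfl]
        · intro m _ hm; rw [if_neg (Ne.symm hm), mul_zero]
        · intro h; exact absurd (Finset.mem_univ n) h
    _ = (d : ℂ) * ∑ n : Fin N, a n * (starRingEnd ℂ) (a n) := by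
        rw [Finset.mul_sum]
        refine Finset.sum_congr rfl fun n _ => ?_
        rw [← mul_pow, mul_inv_cancel₀ hγ0, one_pow]
        ring

lemma htf_mem {M d s q : ℕ} (hds : d * s = M) (hq : q < s) (k : Fin d) :
    (k : ℕ) * s + q < M := by
  calc (k : ℕ) * s + q < ((k : ℕ) + 1) * s := by rw [add_mul, one_mul]; omega
    _ ≤ d * s := Nat.mul_le_mul_right s k.2
    _ = M := hds

lemma htf_filter_image {M d s q : ℕ} (hds : d * s = M) (hq : q < s) :
    Finset.univ.filter (fun i : Fin M => (i : ℕ) % s = q)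
      = Finset.image (fun k : Fin d => (⟨(k : ℕ) * s + q, htf_mem hds hq k⟩ : Fin M))
          Finset.univ := by
  have hs : 0 < s := lt_of_le_of_lt (Nat.zero_le q) hq
  ext i
  simp only [Finset.mem_filter, Finset.mem_univ, true_and, Finset.mem_image]
  constructor
  · intro hi
    have hiq : (i : ℕ) / s < d := by
      rw [Nat.div_lt_iff_lt_mul hs]
      calc (i : ℕ) < M := i.2
        _ = d * s := hds.symm
    refine ⟨⟨(i : ℕ) / s, hiq⟩, ?_⟩
    apply Fin.ext
    simp only
    rw [← hi, Nat.div_add_mod']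
  · rintro ⟨k, rfl⟩
    simp only
    simp [Nat.add_mod, Nat.mul_mod_left, Nat.mod_eq_of_lt hq]

lemma htf_f_inj {M d s q : ℕ} (hds : d * s = M) (hq : q < s) :
    Function.Injective (fun k : Fin d => (⟨(k : ℕ) * s + q, htf_mem hds hq k⟩ : Fin M)) := by
  have hs : 0 < s := lt_of_le_of_lt (Nat.zero_le q) hq
  intro k k' h
  apply Fin.ext
  have h' : (k : ℕ) * s + q = (k' : ℕ) * s + q := congrArg Fin.val h
  have : (k : ℕ) * s = (k' : ℕ) * s := by omega
  exact Nat.eq_of_mul_eq_mul_right hs this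

/-- For a divisor `d ≥ N` of `M`, with `U = diag(γ⁰,…,γ^{N−1})`, each block
`{φ_i : i ≡ q mod M/d}` of the harmonic frame equals `U^q` applied to the block
`{φ_i : i ≡ 0 mod M/d}`, each such block is a tight frame with bound `d/N`, and the
blocks form a disjoint partition of the frame into `M/d` tight frames of `d` vectors. -/
theorem htf_blocks_are_unitary_images {N M : ℕ} (hN : 1 ≤ N) (hM : 1 ≤ M)
    (d : ℕ) (hdvd : d ∣ M) (hdN : N ≤ d)
    (γ : ℂ) (hγ : γ = Complex.exp (2 * Real.pi * Complex.I / M))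
    (Φ : Fin M → EuclideanSpace ℂ (Fin N))
    (hΦ : ∀ (k : Fin M) (n : Fin N),
      Φ k n = (1 / (Real.sqrt N : ℂ)) * γ ^ ((n : ℕ) * (k : ℕ)))
    (U : Matrix (Fin N) (Fin N) ℂ)
    (hU : U = Matrix.diagonal fun n : Fin N => γ ^ (n : ℕ)) :
    (∀ (q k : ℕ), q < M / d → k < d →
      ∀ (hi : k * (M / d) + q < M) (hi0 : k * (M / d) < M) (n : Fin N),
        Φ ⟨k * (M / d) + q, hi⟩ n = Matrix.mulVec (U ^ q) (Φ ⟨k * (M / d), hi0⟩) n) ∧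
    (∀ q : ℕ, q < M / d → ∀ x : EuclideanSpace ℂ (Fin N),
      ∑ i ∈ Finset.univ.filter (fun i : Fin M => (i : ℕ) % (M / d) = q),
        ‖(inner ℂ x (Φ i) : ℂ)‖ ^ 2 = ((d : ℝ) / N) * ‖x‖ ^ 2) ∧
    (∀ q : ℕ, q < M / d →
      (Finset.univ.filter (fun i : Fin M => (i : ℕ) % (M / d) = q)).card = d) ∧
    (∀ q q' : ℕ, q ≠ q' →
      Disjoint (Finset.univ.filter (fun i : Fin M => (i : ℕ) % (M / d) = q))
        (Finset.univ.filter (fun i : Fin M => (i : ℕ) % (M / d) = q'))) ∧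
    Finset.univ = (Finset.range (M / d)).biUnion
      (fun q => Finset.univ.filter fun i : Fin M => (i : ℕ) % (M / d) = q) := by
  have hd0 : 0 < d := lt_of_lt_of_le hN hdN
  have hds : d * (M / d) = M := Nat.mul_div_cancel' hdvd
  have hs : 0 < M / d := Nat.div_pos (Nat.le_of_dvd hM hdvd) hd0
  have hM0 : 0 < M := hM
  have hprim : IsPrimitiveRoot γ M := by
    rw [hγ]; exact Complex.isPrimitiveRoot_exp M hM0.ne'
  have hN0 : (Real.sqrt N : ℂ) ≠ 0 := by
    simp only [ne_eq, Complex.ofReal_eq_zero]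
    exact Real.sqrt_ne_zero'.mpr (by exact_mod_cast hN)
  refine ⟨?_, ?_, ?_, ?_, ?_⟩
  · -- Part 1: pointwise U^q
    intro q k hq hk hi hi0 n
    have hUq : U ^ q = Matrix.diagonal fun n : Fin N => (γ ^ (n : ℕ)) ^ q := by
      rw [hU, Matrix.diagonal_pow]; rfl
    rw [hΦ, hUq, Matrix.mulVec_diagonal, hΦ]
    simp only
    ring
  · -- Part 2: tight frame bound
    intro q hq x
    rw [htf_filter_image hds hq, Finset.sum_image (fun a _ b _ h => htf_f_inj hds hq h)]
    set f : Fin d → Fin M := fun k => ⟨(k : ℕ) * (M / d) + q, htf_mem hds hq k⟩ with hf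
    have hinner : ∀ k : Fin d, (inner ℂ x (Φ (f k)) : ℂ)
        = (1 / (Real.sqrt N : ℂ)) *
            ∑ n : Fin N, (starRingEnd ℂ) (x n) * γ ^ ((n : ℕ) * ((k : ℕ) * (M / d) + q)) := by
      intro k
      rw [PiLp.inner_apply, Finset.mul_sum]
      refine Finset.sum_congr rfl fun n _ => ?_
      rw [RCLike.inner_apply, hΦ]
      simp only [hf]
      ring
    have hxsq : ((‖x‖ ^ 2 : ℝ) : ℂ) = ∑ n : Fin N, (starRingEnd ℂ) (x n) * x n := by
      rw [EuclideanSpace.norm_eq, Real.sq_sqrt (Finset.sum_nonneg fun n _ => sq_nonneg _)]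
      push_cast
      refine Finset.sum_congr rfl fun n _ => ?_
      rw [mul_comm, Complex.mul_conj, Complex.normSq_eq_norm_sq]
      push_cast
      ring
    have hCsum : ((∑ k : Fin d, ‖(inner ℂ x (Φ (f k)) : ℂ)‖ ^ 2 : ℝ) : ℂ)
        = ∑ k : Fin d, (inner ℂ x (Φ (f k)) : ℂ) * (starRingEnd ℂ) (inner ℂ x (Φ (f k)) : ℂ) := by
      push_cast
      refine Finset.sum_congr rfl fun k _ => ?_
      rw [Complex.mul_conj, Complex.normSq_eq_norm_sq]
      push_cast
      ring
    have hmain : ∑ k : Fin d, (inner ℂ x (Φ (f k)) : ℂ) * (starRingEnd ℂ) (inner ℂ x (Φ (f k)) : ℂ)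
        = ((d : ℂ) / N) * ((‖x‖ ^ 2 : ℝ) : ℂ) := by
      have hconjc : (starRingEnd ℂ) (1 / (Real.sqrt N : ℂ)) = 1 / (Real.sqrt N : ℂ) := by
        rw [map_div₀, map_one, Complex.conj_ofReal]
      have hNN : (1 / (Real.sqrt N : ℂ)) * (1 / (Real.sqrt N : ℂ)) = 1 / (N : ℂ) := by
        rw [div_mul_div_comm, one_mul, ← Complex.ofReal_mul,
          Real.mul_self_sqrt (Nat.cast_nonneg N)]
        norm_num
      calc ∑ k : Fin d, (inner ℂ x (Φ (f k)) : ℂ) * (starRingEnd ℂ) (inner ℂ x (Φ (f k)) : ℂ)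
          = ∑ k : Fin d, (1 / (N : ℂ)) *
              ((∑ n : Fin N, (starRingEnd ℂ) (x n) * γ ^ ((n : ℕ) * ((k : ℕ) * (M / d) + q))) *
               (starRingEnd ℂ)
                 (∑ n : Fin N, (starRingEnd ℂ) (x n) * γ ^ ((n : ℕ) * ((k : ℕ) * (M / d) + q)))) := by
            refine Finset.sum_congr rfl fun k _ => ?_
            rw [hinner k, map_mul, hconjc, ← hNN]
            ring
        _ = (1 / (N : ℂ)) * ∑ k ∈ Finset.range d,
              ((∑ n : Fin N, (starRingEnd ℂ) (x n) * γ ^ ((n : ℕ) * (k * (M / d) + q))) *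
               (starRingEnd ℂ)
                 (∑ n : Fin N, (starRingEnd ℂ) (x n) * γ ^ ((n : ℕ) * (k * (M / d) + q)))) := by
            rw [← Finset.mul_sum]
            congr 1
            exact Fin.sum_univ_eq_sum_range (fun k =>
              (∑ n : Fin N, (starRingEnd ℂ) (x n) * γ ^ ((n : ℕ) * (k * (M / d) + q))) *
               (starRingEnd ℂ)
                 (∑ n : Fin N, (starRingEnd ℂ) (x n) * γ ^ ((n : ℕ) * (k * (M / d) + q)))) d
        _ = (1 / (N : ℂ)) * ((d : ℂ) * ∑ n : Fin N,
              (starRingEnd ℂ) (x n) * (starRingEnd ℂ) ((starRingEnd ℂ) (x n))) := by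
            rw [htf_aux2 hs hds hdN hM0 hprim]
        _ = ((d : ℂ) / N) * ((‖x‖ ^ 2 : ℝ) : ℂ) := by
            rw [hxsq]
            simp only [Complex.conj_conj]
            ring
    have : ((∑ k : Fin d, ‖(inner ℂ x (Φ (f k)) : ℂ)‖ ^ 2 : ℝ) : ℂ)
        = (((d : ℝ) / N * ‖x‖ ^ 2 : ℝ) : ℂ) := by
      rw [hCsum, hmain]; push_cast; ring
    exact_mod_cast this
  · -- Part 3: cardinality
    intro q hq
    rw [htf_filter_image hds hq,
      Finset.card_image_of_injective _ (htf_f_inj hds hq), Finset.card_univ, Fintype.card_fin]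
  · -- Part 4: disjointness
    intro q q' hqq'
    simp only [Finset.disjoint_left, Finset.mem_filter, Finset.mem_univ, true_and]
    intro i h1 h2
    exact hqq' (h1 ▸ h2 ▸ rfl)
  · -- Part 5: partition
    refine Finset.ext fun i => ⟨fun _ => ?_, fun _ => Finset.mem_univ i⟩
    simp only [Finset.mem_biUnion, Finset.mem_range, Finset.mem_filter, Finset.mem_univ, true_and]
    exact ⟨(i : ℕ) % (M / d), Nat.mod_lt _ hs, rfl⟩
end

section
/- Let N ≤ p ≤ M − N with N ≥ 2, and suppose Φ = {φ_i}_{i=1}^M is a tight frame for K^N of not-all-equal-norm vectors such that every subcollection of p vectors of Φ is a tight frame. Then a contradiction ensues; i.e., no such non-equal-norm tight frame exists. More precisely: if Φ is a tight frame and every p-element subcollection is tight, and there exist indices with ‖φ_j‖ ≠ ‖φ_k‖, then N = 1. -/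
open Finset

/-- A tight frame for `K^N` in which every subcollection of `p` vectors
(`N ≤ p ≤ M − N`) is tight and which contains two vectors of different norms can only
exist when `N = 1`. -/
theorem no_nonequal_norm_frame_with_all_p_subsets_tight {K : Type*} [RCLike K]
    {N M : ℕ} (p : ℕ) (hp1 : N ≤ p) (hp2 : p ≤ M - N)
    (Φ : Fin M → EuclideanSpace K (Fin N)) (hΦ : IsTightSub Φ Finset.univ)
    (hall : ∀ J : Finset (Fin M), J.card = p → IsTightSub Φ J)
    (j k : Fin M) (hjk : ‖Φ j‖ ≠ ‖Φ k‖) :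
    N = 1 := by
  rcases Nat.eq_zero_or_pos N with hN0 | hN
  · exfalso
    apply hjk
    subst hN0
    haveI : IsEmpty (Fin 0) := inferInstance
    haveI : Subsingleton (EuclideanSpace K (Fin 0)) :=
      ⟨fun a b => PiLp.ext fun i => i.elim0⟩
    rw [Subsingleton.elim (Φ j) (Φ k)]
  -- key: trace identity
  have key : ∀ (J : Finset (Fin M)) (A : ℝ),
      (∀ x : EuclideanSpace K (Fin N),
        ∑ i ∈ J, ‖(inner K x (Φ i) : K)‖ ^ 2 = A * ‖x‖ ^ 2) →
      ∑ i ∈ J, ‖Φ i‖ ^ 2 = A * N := by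
    intro J A hA
    calc ∑ i ∈ J, ‖Φ i‖ ^ 2 = ∑ i ∈ J, ∑ n : Fin N, ‖(Φ i) n‖ ^ 2 := by
          refine Finset.sum_congr rfl fun i _ => ?_
          rw [EuclideanSpace.norm_eq, Real.sq_sqrt (by positivity)]
      _ = ∑ n : Fin N, ∑ i ∈ J,
            ‖(inner K (EuclideanSpace.single n (1:K)) (Φ i) : K)‖ ^ 2 := by
          rw [Finset.sum_comm]
          refine Finset.sum_congr rfl fun n _ => Finset.sum_congr rfl fun i _ => ?_
          rw [EuclideanSpace.inner_single_left]
          simp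
      _ = ∑ n : Fin N, A * ‖EuclideanSpace.single n (1:K)‖ ^ 2 :=
          Finset.sum_congr rfl fun n _ => hA _
      _ = A * N := by simp [EuclideanSpace.norm_single, mul_comm]
  have hjnek : j ≠ k := fun h => hjk (by rw [h])
  -- choose a p-1 subset avoiding j and k
  have hcard2 : ({j, k} : Finset (Fin M)).card = 2 := by
    rw [Finset.card_insert_of_notMem (by simpa using hjnek), Finset.card_singleton]
  have hMN : N ≤ M := by
    by_contra h
    push_neg at h
    omega
  have hsd : ((univ : Finset (Fin M)) \ {j, k}).card = M - 2 := by
    rw [Finset.card_sdiff_of_subset (Finset.subset_univ _), hcard2, Finset.card_univ, Fintype.card_fin]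
  have hle : p - 1 ≤ ((univ : Finset (Fin M)) \ {j, k}).card := by
    rw [hsd]; omega
  obtain ⟨S, hSsub, hScard⟩ := Finset.exists_subset_card_eq hle
  have hjS : j ∉ S := fun h => by
    have := hSsub h; simp at this
  have hkS : k ∉ S := fun h => by
    have := hSsub h; simp at this
  have hJ1 : (insert j S).card = p := by
    rw [Finset.card_insert_of_notMem hjS, hScard]; omega
  have hJ2 : (insert k S).card = p := by
    rw [Finset.card_insert_of_notMem hkS, hScard]; omega
  obtain ⟨A1, _, hA1⟩ := hall _ hJ1
  obtain ⟨A2, _, hA2⟩ := hall _ hJ2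
  -- difference identity
  have hdiff : ∀ x : EuclideanSpace K (Fin N),
      ‖(inner K x (Φ j) : K)‖ ^ 2 - ‖(inner K x (Φ k) : K)‖ ^ 2 = (A1 - A2) * ‖x‖ ^ 2 := by
    intro x
    have e1 := hA1 x
    have e2 := hA2 x
    rw [Finset.sum_insert hjS] at e1
    rw [Finset.sum_insert hkS] at e2
    linarith
  have t1 := key _ _ hA1
  have t2 := key _ _ hA2
  rw [Finset.sum_insert hjS] at t1
  rw [Finset.sum_insert hkS] at t2
  -- (A1 - A2) * N = ‖Φ j‖² - ‖Φ k‖²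
  have hAN : (A1 - A2) * N = ‖Φ j‖ ^ 2 - ‖Φ k‖ ^ 2 := by linarith
  have hjj : ‖(inner K (Φ j) (Φ j) : K)‖ = ‖Φ j‖ ^ 2 := by
    rw [inner_self_eq_norm_sq_to_K]; simp [pow_two]
  have hkk : ‖(inner K (Φ k) (Φ k) : K)‖ = ‖Φ k‖ ^ 2 := by
    rw [inner_self_eq_norm_sq_to_K]; simp [pow_two]
  have hsym : ‖(inner K (Φ k) (Φ j) : K)‖ = ‖(inner K (Φ j) (Φ k) : K)‖ := by
    rw [← inner_conj_symm (Φ j) (Φ k)]; exact (RCLike.norm_conj _).symm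
  have e1 := hdiff (Φ j)
  have e2 := hdiff (Φ k)
  rw [hjj] at e1
  rw [hkk, hsym] at e2
  set a := ‖Φ j‖ with ha
  set b := ‖Φ k‖ with hb
  set c := ‖(inner K (Φ j) (Φ k) : K)‖ with hc
  -- a⁴ - b⁴ = (A1-A2)(a²+b²), (A1-A2)N = a²-b²
  have h4 : a ^ 4 - b ^ 4 ≠ 0 := by
    intro h
    apply hjk
    exact (pow_left_inj₀ (norm_nonneg _) (norm_nonneg _) (by norm_num)).mp (by linarith : a ^ 4 = b ^ 4)
  have hkey : ((N : ℝ) - 1) * (a ^ 4 - b ^ 4) = 0 := by nlinarith [e1, e2, hAN]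
  have : (N : ℝ) = 1 := by
    rcases mul_eq_zero.mp hkey with h | h
    · linarith
    · exact absurd h h4
  exact_mod_cast this
end
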